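/- arXiv:1502.07253 — 2 statements merged into one kernel-verified Lean document; each statement's English description precedes it below -/
import Mathlib

section
/- Let Ω ⊆ ℝ² be an r-set, f ∈ W^{1,1}(Ω, ℝ²), let AB be a side of type A of the grid of Ω, let ε ≪ 1, and let M ∈ ℝ^{2×2}. Let ℛ ⊆ Ω be the union of the 6 squares of the grid having A or B as a vertex, and set Γ(A, B, M) = {(x, y) ∈ I_ε(A) × I_ε(B) : ∫_{xy} |Df − M| dℋ¹ > (25/(εr)) ∫_ℛ |Df − M| dℋ²}, where the inner integral is along the segment xy. Then ℋ¹({x ∈ I_ε(A) : ℋ¹({y ∈ I_ε(B) : (x,y) ∈ Γ}) > ℋ¹(I_ε(B))/5}) < ℋ¹(I_ε(A))/5. -/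
set_option autoImplicit false

open MeasureTheory Set Metric
open scoped ENNReal NNReal Classical

noncomputable section

/-- The Euclidean plane. -/
abbrev E2 := EuclideanSpace ℝ (Fin 2)

/-- The point of the plane with coordinates `(a, b)`. -/
def pt (a b : ℝ) : E2 := WithLp.toLp 2 ![a, b]

/-- The open axis-parallel square with center `c` and half-side `r`. -/
def sqO (c : E2) (r : ℝ) : Set E2 := {x | |x 0 - c 0| < r ∧ |x 1 - c 1| < r}

/-- The closed axis-parallel square with center `c` and half-side `r`. -/
def sqC (c : E2) (r : ℝ) : Set E2 := {x | |x 0 - c 0| ≤ r ∧ |x 1 - c 1| ≤ r}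

/-- The boundary of the axis-parallel square with center `c` and half-side `r`. -/
def sqBd (c : E2) (r : ℝ) : Set E2 := sqC c r \ sqO c r

/-- A choice of (unit) tangent vector at the points of the boundary of an axis-parallel
square centered at `c`: the horizontal unit vector on the two horizontal sides, the vertical
unit vector on the two vertical sides (and at the corners, which are `ℋ¹`-negligible). -/
def sqTangent (c : E2) (x : E2) : E2 :=
  if |x 0 - c 0| < |x 1 - c 1| then EuclideanSpace.single 0 1 else EuclideanSpace.single 1 1

/-- `f` belongs to the Sobolev space `W^{1,1}(Ω, ℝ²)`: it is integrable on `Ω`, a.e.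
differentiable on `Ω`, and its differential is integrable on `Ω`. -/
def MemW11 (Ω : Set E2) (f : E2 → E2) : Prop :=
  IntegrableOn f Ω volume ∧ (∀ᵐ x ∂(volume.restrict Ω), DifferentiableAt ℝ f x) ∧
    IntegrableOn (fun x => fderiv ℝ f x) Ω volume

/-- `f` is a homeomorphism between `Ω` and `f(Ω)`. -/
def IsHomeoOnto (f : E2 → E2) (Ω : Set E2) : Prop :=
  ∃ e : Ω ≃ₜ (f '' Ω), ∀ x : Ω, (e x : E2) = f x

/-- `g` is piecewise linear on the set `C`: `C` is a finite union of segments, on each of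
which `g` coincides with an affine map. -/
def PiecewiseLinearOn (g : E2 → E2) (C : Set E2) : Prop :=
  ∃ (n : ℕ) (P Q : Fin n → E2), (⋃ i, segment ℝ (P i) (Q i)) = C ∧
    ∀ i, ∃ φ : E2 →ᵃ[ℝ] E2, EqOn g φ (segment ℝ (P i) (Q i))

/-- `h` is finitely piecewise affine on the (closed) set `S`: there is a finite triangulation
of `S` (nondegenerate triangles with pairwise disjoint interiors whose union is `S`) such that
`h` coincides with an affine map on each triangle. -/
def FinitelyPiecewiseAffineOn (h : E2 → E2) (S : Set E2) : Prop :=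
  ∃ (n : ℕ) (T : Fin n → Fin 3 → E2),
    (∀ i, AffineIndependent ℝ (T i)) ∧
    (⋃ i, convexHull ℝ (range (T i))) = S ∧
    (∀ i j, i ≠ j →
      interior (convexHull ℝ (range (T i))) ∩ interior (convexHull ℝ (range (T j))) = ∅) ∧
    (∀ i, ∃ φ : E2 →ᵃ[ℝ] E2, EqOn h φ (convexHull ℝ (range (T i))))

/-- The `W^{1,1}(Ω)` distance of `f` and `g` : the `L¹` norm of `f - g` plus the `L¹` norm
of `Df - Dg`. -/
def W11dist (Ω : Set E2) (f g : E2 → E2) : ℝ≥0∞ :=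
  eLpNorm (fun x => f x - g x) 1 (volume.restrict Ω) +
    eLpNorm (fun x => fderiv ℝ f x - fderiv ℝ g x) 1 (volume.restrict Ω)

/-- The `L^∞(Ω)` distance of `f` and `g`. -/
def LinfDist (Ω : Set E2) (f g : E2 → E2) : ℝ≥0∞ :=
  eLpNorm (fun x => f x - g x) ⊤ (volume.restrict Ω)

/-- The closed square of the grid of mesh `2r` indexed by the lattice point `q ∈ ℤ²`,
namely `[2rq₁, 2rq₁+2r] × [2rq₂, 2rq₂+2r]`. -/
def cell (r : ℝ) (q : ℤ × ℤ) : Set E2 :=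
  {x | x 0 ∈ Icc (2*r*(q.1:ℝ)) (2*r*(q.1:ℝ) + 2*r) ∧ x 1 ∈ Icc (2*r*(q.2:ℝ)) (2*r*(q.2:ℝ) + 2*r)}

/-- The `r`-set determined by the finite family `C` of lattice squares: the finite union of the
(essentially disjoint) closed squares of side `2r` indexed by `C`. -/
def Rset (r : ℝ) (C : Finset (ℤ × ℤ)) : Set E2 := ⋃ q ∈ C, cell r q

/-- The vertex of the grid of mesh `2r` at the lattice point `p`. -/
def vtx (r : ℝ) (p : ℤ × ℤ) : E2 := pt (2*r*(p.1:ℝ)) (2*r*(p.2:ℝ))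

/-- The lattice point `p` is a corner of the cell indexed by `q`. -/
def isCorner (p q : ℤ × ℤ) : Prop := p = q ∨ p = q + (1,0) ∨ p = q + (0,1) ∨ p = q + (1,1)

/-- The union `ℛ` of the squares of the grid of the `r`-set having (the vertex at) `p` or `p'`
as one vertex. -/
def Rnb (r : ℝ) (C : Finset (ℤ × ℤ)) (p p' : ℤ × ℤ) : Set E2 :=
  ⋃ q ∈ C, ⋃ (_ : isCorner p q ∨ isCorner p' q), cell r q

/-- The segment from the vertex at `p` to the vertex at `p'` is a side (an edge) of the grid of
the `r`-set determined by `C`. -/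
def isEdge (C : Finset (ℤ × ℤ)) (p p' : ℤ × ℤ) : Prop :=
  (p' = p + (1,0) ∧ (p ∈ C ∨ p - (0,1) ∈ C)) ∨ (p' = p + (0,1) ∧ (p ∈ C ∨ p - (1,0) ∈ C))

/-- The segment `I_ε(V)` of length `2√2 εr` centered at `V` with direction `π/4`, used for
vertices of type A. -/
def IsegA (r ε : ℝ) (V : E2) : Set E2 :=
  segment ℝ (V - (ε*r) • pt 1 1) (V + (ε*r) • pt 1 1)


set_option maxHeartbeats 1000000
open scoped RealInnerProductSpace

section line

variable {v : E2}

lemma line_injective (hv : v ≠ 0) (P : E2) : Function.Injective (fun t : ℝ => P + t • v) := by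
  intro a b hab
  simp only [add_right_inj] at hab
  have h : (a - b) • v = 0 := by rw [sub_smul, hab, sub_self]
  rcases smul_eq_zero.1 h with h' | h'
  · linarith [sub_eq_zero.1 (by exact_mod_cast h')]
  · exact absurd h' hv

lemma line_continuous (P : E2) : Continuous (fun t : ℝ => P + t • v) := by
  continuity

lemma line_lipschitz (P : E2) : LipschitzWith ‖v‖₊ (fun t : ℝ => P + t • v) := by
  apply LipschitzWith.of_dist_le_mul
  intro x y
  rw [dist_eq_norm, dist_eq_norm]
  have : P + x • v - (P + y • v) = (x - y) • v := by module
  rw [this, norm_smul, Real.norm_eq_abs]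
  rw [mul_comm]
  simp

lemma line_inv_lipschitz (hv : v ≠ 0) (P : E2) :
    LipschitzWith ‖v‖₊⁻¹ (fun z : E2 => ⟪z - P, v⟫ / ‖v‖ ^ 2) := by
  apply LipschitzWith.of_dist_le_mul
  intro x y
  rw [dist_eq_norm, dist_eq_norm]
  have hvn : (0:ℝ) < ‖v‖ := norm_pos_iff.2 hv
  have : ⟪x - P, v⟫ / ‖v‖ ^ 2 - ⟪y - P, v⟫ / ‖v‖ ^ 2 = ⟪x - y, v⟫ / ‖v‖ ^ 2 := by
    rw [div_sub_div_same]
    congr 1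
    rw [← inner_sub_left]
    congr 1
    abel
  rw [this]
  have h1 : |⟪x - y, v⟫| ≤ ‖x - y‖ * ‖v‖ := abs_real_inner_le_norm _ _
  have h2 : ((‖v‖₊⁻¹ : ℝ≥0) : ℝ) = ‖v‖⁻¹ := by simp
  rw [Real.norm_eq_abs, abs_div, abs_of_nonneg (by positivity : (0:ℝ) ≤ ‖v‖ ^ 2), h2]
  rw [div_le_iff₀ (by positivity)]
  calc |⟪x - y, v⟫| ≤ ‖x - y‖ * ‖v‖ := h1
    _ = ‖v‖⁻¹ * ‖x - y‖ * ‖v‖ ^ 2 := by field_simp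
    _ ≤ _ := le_refl _

lemma line_inv_comp (hv : v ≠ 0) (P : E2) (t : ℝ) :
    ⟪(P + t • v) - P, v⟫ / ‖v‖ ^ 2 = t := by
  have hvn : (0:ℝ) < ‖v‖ := norm_pos_iff.2 hv
  rw [add_sub_cancel_left, real_inner_smul_left, real_inner_self_eq_norm_sq]
  field_simp

lemma hausdorff_image_line (hv : v ≠ 0) (P : E2) (S : Set ℝ) :
    μH[1] ((fun t : ℝ => P + t • v) '' S) = (‖v‖₊ : ℝ≥0∞) * volume S := by
  have hvn : ‖v‖₊ ≠ 0 := by simpa using hv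
  apply le_antisymm
  · have h := (line_lipschitz (v := v) P).hausdorffMeasure_image_le zero_le_one S
    rw [ENNReal.rpow_one, MeasureTheory.hausdorffMeasure_real] at h
    exact h
  · have hid : S = (fun z : E2 => ⟪z - P, v⟫ / ‖v‖ ^ 2) '' ((fun t : ℝ => P + t • v) '' S) := by
      rw [← Set.image_comp]
      have : ((fun z : E2 => ⟪z - P, v⟫ / ‖v‖ ^ 2) ∘ (fun t : ℝ => P + t • v)) = id := by
        funext t; exact line_inv_comp hv P t
      rw [this, Set.image_id]
    have h := (line_inv_lipschitz hv P).hausdorffMeasure_image_le zero_le_one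
      ((fun t : ℝ => P + t • v) '' S)
    rw [ENNReal.rpow_one, MeasureTheory.hausdorffMeasure_real, ← hid] at h
    -- h : volume S ≤ ↑‖v‖₊⁻¹ * μH[1] (image)
    have h2 : (‖v‖₊ : ℝ≥0∞) * volume S ≤ (‖v‖₊ : ℝ≥0∞) * ((‖v‖₊⁻¹ : ℝ≥0) : ℝ≥0∞) * μH[1] ((fun t : ℝ => P + t • v) '' S) := by
      rw [mul_assoc]
      exact mul_le_mul_right h _
    have h3 : (‖v‖₊ : ℝ≥0∞) * ((‖v‖₊⁻¹ : ℝ≥0) : ℝ≥0∞) = 1 := by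
      rw [← ENNReal.coe_mul, mul_inv_cancel₀ hvn, ENNReal.coe_one]
    rwa [h3, one_mul] at h2

lemma line_measurableEmbedding (hv : v ≠ 0) (P : E2) :
    MeasurableEmbedding (fun t : ℝ => P + t • v) := by
  have h1 : Topology.IsClosedEmbedding (fun t : ℝ => t • v) := isClosedEmbedding_smul_left hv
  have h2 : Topology.IsClosedEmbedding (fun z : E2 => P + z) :=
    (Homeomorph.addLeft P).isClosedEmbedding
  exact (h2.comp h1).measurableEmbedding

lemma line_restrict (hv : v ≠ 0) (P : E2) (S : Set ℝ) (hS : MeasurableSet S) :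
    μH[1].restrict ((fun t : ℝ => P + t • v) '' S) =
      Measure.map (fun t : ℝ => P + t • v) (((‖v‖₊ : ℝ≥0∞)) • volume.restrict S) := by
  have hm : Measurable (fun t : ℝ => P + t • v) := (line_continuous P).measurable
  apply Measure.ext
  intro T hT
  rw [Measure.restrict_apply hT, Measure.map_apply hm hT, Measure.smul_apply,
    Measure.restrict_apply (hm hT)]
  have hset : T ∩ (fun t : ℝ => P + t • v) '' S
      = (fun t : ℝ => P + t • v) '' ((fun t : ℝ => P + t • v) ⁻¹' T ∩ S) := by
    rw [Set.inter_comm, ← Set.image_inter_preimage, Set.inter_comm]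
  rw [hset, hausdorff_image_line hv P, smul_eq_mul]

lemma lintegral_line_image (hv : v ≠ 0) (P : E2) (S : Set ℝ) (hS : MeasurableSet S)
    {g : E2 → ℝ≥0∞} (hg : Measurable g) :
    ∫⁻ z in (fun t : ℝ => P + t • v) '' S, g z ∂μH[1]
      = (‖v‖₊ : ℝ≥0∞) * ∫⁻ t in S, g (P + t • v) := by
  rw [line_restrict hv P S hS, lintegral_map hg (line_continuous P).measurable,
    lintegral_smul_measure, smul_eq_mul]

lemma segment_eq_line_image (P : E2) {c : ℝ} (hc : 0 < c) :
    segment ℝ (P - c • v) (P + c • v) = (fun t : ℝ => P + t • v) '' Icc (-c) c := by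
  rw [segment_eq_image' ℝ]
  ext z
  constructor
  · rintro ⟨θ, hθ, rfl⟩
    refine ⟨-c + θ * (2 * c), ⟨by nlinarith [hθ.1, hθ.2], by nlinarith [hθ.1, hθ.2]⟩, ?_⟩
    simp only
    module
  · rintro ⟨t, ht, rfl⟩
    have h2c : (0:ℝ) < 2 * c := by linarith
    refine ⟨(t + c) / (2 * c), ⟨?_, ?_⟩, ?_⟩
    · apply div_nonneg _ h2c.le
      linarith [ht.1]
    · rw [div_le_one h2c]
      linarith [ht.2]
    · simp only
      have key : ((t + c) / (2 * c)) • (P + c • v - (P - c • v)) = (t + c) • v := by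
        have : P + c • v - (P - c • v) = (2 * c) • v := by module
        rw [this, smul_smul, div_mul_cancel₀ _ h2c.ne']
      rw [key]
      module

lemma lintegral_segment (x y : E2) (hxy : y - x ≠ 0) {g : E2 → ℝ≥0∞} (hg : Measurable g) :
    ∫⁻ z in segment ℝ x y, g z ∂μH[1]
      = (‖y - x‖₊ : ℝ≥0∞) * ∫⁻ u in Icc (0:ℝ) 1, g (x + u • (y - x)) := by
  rw [segment_eq_image' ℝ x y]
  exact lintegral_line_image hxy x (Icc 0 1) measurableSet_Icc hg

lemma image_sep {α β : Type*} {f : α → β} (hf : Function.Injective f) (S : Set α) (Q : β → Prop) :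
    {y ∈ f '' S | Q y} = f '' {a ∈ S | Q (f a)} := by
  ext z
  constructor
  · rintro ⟨⟨a, ha, rfl⟩, hq⟩
    exact ⟨a, ⟨ha, hq⟩, rfl⟩
  · rintro ⟨a, ⟨ha, hq⟩, rfl⟩
    exact ⟨⟨a, ha, rfl⟩, hq⟩

end line

lemma map_affine_plane (A e v : E2) (hdet : e 0 * v 1 - v 0 * e 1 ≠ 0) :
    Measure.map (fun q : ℝ × ℝ => A + q.1 • e + q.2 • v) volume
      = ENNReal.ofReal |e 0 * v 1 - v 0 * e 1|⁻¹ • volume := by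
  set m : Matrix (Fin 2) (Fin 2) ℝ := !![e 0, v 0; e 1, v 1] with hm
  have hmdet : m.det = e 0 * v 1 - v 0 * e 1 := by
    rw [hm, Matrix.det_fin_two_of]
  have hdet' : LinearMap.det (Matrix.toLin' m) ≠ 0 := by
    rw [LinearMap.det_toLin', hmdet]; exact hdet
  have hfun : (fun q : ℝ × ℝ => A + q.1 • e + q.2 • v)
      = (fun z : E2 => A + z) ∘ (WithLp.toLp 2 : (Fin 2 → ℝ) → E2)
        ∘ (⇑(Matrix.toLin' m)) ∘ (⇑(MeasurableEquiv.finTwoArrow (α := ℝ)).symm) := by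
    funext q
    show A + q.1 • e + q.2 • v
      = A + WithLp.toLp 2
          (Matrix.toLin' m (MeasurableEquiv.finTwoArrow.symm q))
    have h1 : (MeasurableEquiv.finTwoArrow.symm q : Fin 2 → ℝ) = ![q.1, q.2] := by
      funext i; fin_cases i <;> simp [MeasurableEquiv.finTwoArrow, MeasurableEquiv.piFinTwo]
    rw [h1]
    refine PiLp.ext fun i => ?_
    fin_cases i <;>
      · simp [m, Matrix.toLin'_apply, Matrix.mulVec, dotProduct, PiLp.add_apply,
          PiLp.smul_apply, PiLp.toLp_apply,
          smul_eq_mul]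
        try ring
  rw [hfun]
  have m1 : Measurable (fun z : E2 => A + z) := measurable_const.add measurable_id
  have m2 : Measurable (WithLp.toLp 2 : (Fin 2 → ℝ) → E2) :=
    (MeasurableEquiv.toLp 2 (Fin 2 → ℝ)).measurable
  have m3 : Measurable (⇑(Matrix.toLin' m) : (Fin 2 → ℝ) → (Fin 2 → ℝ)) :=
    (Matrix.toLin' m).continuous_of_finiteDimensional.measurable
  have m4 : Measurable (⇑(MeasurableEquiv.finTwoArrow (α := ℝ)).symm) :=
    (MeasurableEquiv.finTwoArrow (α := ℝ)).symm.measurable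
  rw [← Function.comp_assoc, ← Function.comp_assoc]
  rw [← Measure.map_map (by exact (m1.comp m2).comp m3) m4]
  rw [(MeasurePreserving.symm _ (volume_preserving_finTwoArrow ℝ)).map_eq]
  rw [← Measure.map_map (by exact m1.comp m2) m3]
  rw [Real.map_linearMap_volume_pi_eq_smul_volume_pi hdet']
  rw [Measure.map_smul]
  rw [← Measure.map_map m1 m2]
  rw [(PiLp.volume_preserving_toLp (Fin 2)).map_eq]
  have hA : Measure.map (fun z : E2 => A + z) volume = volume := by
    have := Measure.IsAddLeftInvariant.map_add_left_eq_self (μ := (volume : Measure E2)) A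
    simpa using this
  rw [hA, LinearMap.det_toLin', hmdet, abs_inv]

lemma cov_bound (A e v : E2) (hdet : e 0 * v 1 - v 0 * e 1 ≠ 0)
    {g : E2 → ℝ≥0∞} (hg : Measurable g) (R : Set E2) (hR : MeasurableSet R) (c : ℝ)
    (hsub : ∀ u s : ℝ, u ∈ Icc (0:ℝ) 1 → s ∈ Icc (-c) c → A + u • e + s • v ∈ R) :
    ∫⁻ u in Icc (0:ℝ) 1, ∫⁻ s in Icc (-c) c, g (A + u • e + s • v) ∂volume ∂volume
      ≤ ENNReal.ofReal |e 0 * v 1 - v 0 * e 1|⁻¹ * ∫⁻ z in R, g z ∂volume := by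
  set Φ : ℝ × ℝ → E2 := fun q => A + q.1 • e + q.2 • v with hΦ
  have hΦm : Measurable Φ := by
    apply Measurable.add
    apply Measurable.add measurable_const
    · exact (measurable_fst.smul measurable_const)
    · exact (measurable_snd.smul measurable_const)
  have step1 : ∫⁻ q in (Icc (0:ℝ) 1) ×ˢ (Icc (-c) c), g (Φ q) ∂volume
      = ∫⁻ u in Icc (0:ℝ) 1, ∫⁻ s in Icc (-c) c, g (A + u • e + s • v) ∂volume ∂volume := by
    rw [MeasureTheory.Measure.volume_eq_prod, ← Measure.prod_restrict]
    exact lintegral_prod (fun q => g (Φ q)) ((hg.comp hΦm).aemeasurable)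
  rw [← step1]
  have step2 : ∫⁻ q in (Icc (0:ℝ) 1) ×ˢ (Icc (-c) c), g (Φ q) ∂volume
      ≤ ∫⁻ q in (Icc (0:ℝ) 1) ×ˢ (Icc (-c) c), (R.indicator g) (Φ q) ∂volume := by
    apply setLIntegral_mono' (measurableSet_Icc.prod measurableSet_Icc)
    rintro ⟨u, s⟩ hq
    have := hsub u s hq.1 hq.2
    rw [Set.indicator_of_mem this]
  refine step2.trans ?_
  have step3 : ∫⁻ q in (Icc (0:ℝ) 1) ×ˢ (Icc (-c) c), (R.indicator g) (Φ q) ∂volume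
      ≤ ∫⁻ q, (R.indicator g) (Φ q) ∂volume :=
    lintegral_mono' Measure.restrict_le_self le_rfl
  refine step3.trans ?_
  rw [← lintegral_map (hg.indicator hR) hΦm, map_affine_plane A e v hdet,
    lintegral_smul_measure, smul_eq_mul, lintegral_indicator hR]

lemma vol_preimage_affine (a c : ℝ) (ha : a ≠ 0) (S : Set ℝ) (hS : MeasurableSet S) :
    volume {t : ℝ | c + a * t ∈ S} = ENNReal.ofReal |a|⁻¹ * volume S := by
  have hfun : (fun t : ℝ => c + a * t) = (fun t : ℝ => c + t) ∘ (fun t : ℝ => a * t) := rfl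
  have hmap : Measure.map (fun t : ℝ => c + a * t) volume = ENNReal.ofReal |a|⁻¹ • volume := by
    rw [hfun, ← Measure.map_map (f := fun t : ℝ => a * t) (g := fun t : ℝ => c + t)
      (measurable_id.const_add c) (measurable_id.const_mul a)]
    rw [Real.map_volume_mul_left ha, Measure.map_smul,
      Measure.IsAddLeftInvariant.map_add_left_eq_self c, abs_inv]
  have : {t : ℝ | c + a * t ∈ S} = (fun t : ℝ => c + a * t) ⁻¹' S := rfl
  rw [this, ← Measure.map_apply (μ := volume) (f := fun t : ℝ => c + a * t) (by fun_prop) hS,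
    hmap, Measure.smul_apply, smul_eq_mul]

lemma pt_apply0 (a b : ℝ) : pt a b 0 = a := rfl
lemma pt_apply1 (a b : ℝ) : pt a b 1 = b := rfl
lemma e2_add_apply (x y : E2) (i : Fin 2) : (x + y) i = x i + y i := rfl
lemma e2_smul_apply (c : ℝ) (x : E2) (i : Fin 2) : (c • x) i = c * x i := rfl

lemma contin_apply (i : Fin 2) : Continuous (fun x : E2 => x i) :=
  (EuclideanSpace.proj i : E2 →L[ℝ] ℝ).continuous

lemma cell_isClosed (r : ℝ) (q : ℤ × ℤ) : IsClosed (cell r q) := by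
  have h0 : cell r q = ((fun x : E2 => x 0) ⁻¹' Icc (2*r*(q.1:ℝ)) (2*r*(q.1:ℝ) + 2*r)) ∩
      ((fun x : E2 => x 1) ⁻¹' Icc (2*r*(q.2:ℝ)) (2*r*(q.2:ℝ) + 2*r)) := rfl
  rw [h0]
  exact (isClosed_Icc.preimage (contin_apply 0)).inter (isClosed_Icc.preimage (contin_apply 1))

lemma cell_measurableSet (r : ℝ) (q : ℤ × ℤ) : MeasurableSet (cell r q) :=
  (cell_isClosed r q).measurableSet

lemma norm_le_coords (x : E2) : ‖x‖ ≤ |x 0| + |x 1| := by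
  rw [EuclideanSpace.norm_eq]
  have h1 : ∑ i : Fin 2, ‖x i‖ ^ 2 = ‖x 0‖^2 + ‖x 1‖^2 := by
    simp [Fin.sum_univ_two]
  rw [h1]
  have h2 : ‖x 0‖^2 + ‖x 1‖^2 ≤ (|x 0| + |x 1|)^2 := by
    simp only [Real.norm_eq_abs]
    nlinarith [abs_nonneg (x 0), abs_nonneg (x 1)]
  calc Real.sqrt (‖x 0‖^2 + ‖x 1‖^2) ≤ Real.sqrt ((|x 0| + |x 1|)^2) := Real.sqrt_le_sqrt h2
    _ = |x 0| + |x 1| := Real.sqrt_sq (by positivity)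

lemma cell_isBounded (r : ℝ) (q : ℤ × ℤ) : Bornology.IsBounded (cell r q) := by
  rw [Metric.isBounded_iff_subset_closedBall 0]
  refine ⟨(|2*r*(q.1:ℝ)| + |2*r*(q.1:ℝ) + 2*r|) + (|2*r*(q.2:ℝ)| + |2*r*(q.2:ℝ) + 2*r|), ?_⟩
  intro x hx
  obtain ⟨⟨h1, h2⟩, ⟨h3, h4⟩⟩ := hx
  rw [Metric.mem_closedBall, dist_zero_right]
  have b0 : |x 0| ≤ |2*r*(q.1:ℝ)| + |2*r*(q.1:ℝ) + 2*r| := by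
    rcases abs_cases (x 0) with ⟨he, _⟩ | ⟨he, _⟩ <;> rcases abs_cases (2*r*(q.1:ℝ)) with ⟨h5,_⟩|⟨h5,_⟩ <;>
      rcases abs_cases (2*r*(q.1:ℝ) + 2*r) with ⟨h6,_⟩|⟨h6,_⟩ <;> nlinarith
  have b1 : |x 1| ≤ |2*r*(q.2:ℝ)| + |2*r*(q.2:ℝ) + 2*r| := by
    rcases abs_cases (x 1) with ⟨he, _⟩ | ⟨he, _⟩ <;> rcases abs_cases (2*r*(q.2:ℝ)) with ⟨h5,_⟩|⟨h5,_⟩ <;>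
      rcases abs_cases (2*r*(q.2:ℝ) + 2*r) with ⟨h6,_⟩|⟨h6,_⟩ <;> nlinarith
  linarith [norm_le_coords x]

lemma cell_volume_lt_top (r : ℝ) (q : ℤ × ℤ) : volume (cell r q) < ⊤ :=
  ((isCompact_of_isClosed_isBounded (cell_isClosed r q) (cell_isBounded r q))).measure_lt_top

lemma Rset_volume_lt_top (r : ℝ) (C : Finset (ℤ × ℤ)) : volume (Rset r C) < ⊤ := by
  refine lt_of_le_of_lt (measure_biUnion_finset_le C (cell r)) ?_
  exact ENNReal.sum_lt_top.2 fun q _ => cell_volume_lt_top r q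

lemma Rnb_subset_Rset (r : ℝ) (C : Finset (ℤ × ℤ)) (p p' : ℤ × ℤ) :
    Rnb r C p p' ⊆ Rset r C := by
  intro x hx
  simp only [Rnb, Set.mem_iUnion] at hx
  obtain ⟨q, hq, _, hcell⟩ := hx
  exact Set.mem_biUnion hq hcell

lemma Rnb_measurableSet (r : ℝ) (C : Finset (ℤ × ℤ)) (p p' : ℤ × ℤ) :
    MeasurableSet (Rnb r C p p') := by
  apply MeasurableSet.biUnion C.countable_toSet
  intro q _
  exact MeasurableSet.iUnion fun _ => cell_measurableSet r q

lemma mem_Rnb_of_cell {r : ℝ} {C : Finset (ℤ × ℤ)} {p p' q : ℤ × ℤ} (hq : q ∈ C)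
    (hcorn : isCorner p q ∨ isCorner p' q) {x : E2} (hx : x ∈ cell r q) : x ∈ Rnb r C p p' := by
  simp only [Rnb, Set.mem_iUnion]
  exact ⟨q, hq, hcorn, hx⟩

lemma cell_mem_C_of_interior {r : ℝ} (hr : 0 < r) {C : Finset (ℤ × ℤ)} {p : ℤ × ℤ}
    (h : vtx r p ∈ interior (Rset r C)) (i j : ℤ) (hi : i = 0 ∨ i = -1) (hj : j = 0 ∨ j = -1) :
    (p.1 + i, p.2 + j) ∈ C := by
  obtain ⟨δ, hδ, hball⟩ := Metric.mem_nhds_iff.1 (mem_interior_iff_mem_nhds.1 h)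
  set e : ℝ := min (δ/2) r with he_def
  have he : 0 < e := lt_min (by linarith) hr
  have her : e ≤ r := min_le_right _ _
  have heδ : e ≤ δ/2 := min_le_left _ _
  set ox : ℝ := if i = 0 then e/2 else -(e/2) with hox
  set oy : ℝ := if j = 0 then e/2 else -(e/2) with hoy
  have hoxabs : |ox| = e/2 := by
    rcases hi with h'|h' <;> simp [hox, h', abs_of_pos, he, abs_of_neg, neg_neg] <;>
      rw [abs_of_pos (by linarith)]
  have hoyabs : |oy| = e/2 := by
    rcases hj with h'|h' <;> simp [hoy, h', abs_of_pos, he, abs_of_neg, neg_neg] <;>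
      rw [abs_of_pos (by linarith)]
  set w : E2 := vtx r p + pt ox oy with hw
  have hwball : w ∈ Metric.ball (vtx r p) δ := by
    rw [Metric.mem_ball, dist_eq_norm]
    have : w - vtx r p = pt ox oy := by rw [hw]; abel
    rw [this]
    calc ‖pt ox oy‖ ≤ |pt ox oy 0| + |pt ox oy 1| := norm_le_coords _
      _ = e/2 + e/2 := by rw [pt_apply0, pt_apply1, hoxabs, hoyabs]
      _ < δ := by linarith
  have hwR : w ∈ Rset r C := hball hwball
  simp only [Rset, Set.mem_iUnion] at hwR
  obtain ⟨q, hq, hcell⟩ := hwR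
  obtain ⟨⟨c1, c2⟩, ⟨c3, c4⟩⟩ := hcell
  have hw0 : w 0 = 2*r*(p.1:ℝ) + ox := rfl
  have hw1 : w 1 = 2*r*(p.2:ℝ) + oy := rfl
  rw [hw0] at c1 c2
  rw [hw1] at c3 c4
  -- pin q.1 = p.1 + i
  have hq1 : q.1 = p.1 + i := by
    rcases hi with h'|h'
    · subst h'
      have hox0 : ox = e/2 := by simp [hox]
      rw [hox0] at c1 c2
      have l1 : (q.1:ℝ) < (p.1:ℝ) + 1 := by nlinarith
      have l2 : (p.1:ℝ) - 1 < (q.1:ℝ) := by nlinarith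
      have l1' : q.1 < p.1 + 1 := by exact_mod_cast (by push_cast; linarith : (q.1:ℝ) < ((p.1 + 1 : ℤ):ℝ))
      have l2' : p.1 - 1 < q.1 := by exact_mod_cast (by push_cast; linarith : ((p.1 - 1 : ℤ):ℝ) < (q.1:ℝ))
      omega
    · subst h'
      have hox0 : ox = -(e/2) := by simp [hox]
      rw [hox0] at c1 c2
      have l1 : (q.1:ℝ) < (p.1:ℝ) := by nlinarith
      have l2 : (p.1:ℝ) - 2 < (q.1:ℝ) := by nlinarith
      have l1' : q.1 < p.1 := by exact_mod_cast l1
      have l2' : p.1 - 2 < q.1 := by exact_mod_cast (by push_cast; linarith : ((p.1 - 2 : ℤ):ℝ) < (q.1:ℝ))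
      omega
  have hq2 : q.2 = p.2 + j := by
    rcases hj with h'|h'
    · subst h'
      have hoy0 : oy = e/2 := by simp [hoy]
      rw [hoy0] at c3 c4
      have l1 : (q.2:ℝ) < (p.2:ℝ) + 1 := by nlinarith
      have l2 : (p.2:ℝ) - 1 < (q.2:ℝ) := by nlinarith
      have l1' : q.2 < p.2 + 1 := by exact_mod_cast (by push_cast; linarith : (q.2:ℝ) < ((p.2 + 1 : ℤ):ℝ))
      have l2' : p.2 - 1 < q.2 := by exact_mod_cast (by push_cast; linarith : ((p.2 - 1 : ℤ):ℝ) < (q.2:ℝ))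
      omega
    · subst h'
      have hoy0 : oy = -(e/2) := by simp [hoy]
      rw [hoy0] at c3 c4
      have l1 : (q.2:ℝ) < (p.2:ℝ) := by nlinarith
      have l2 : (p.2:ℝ) - 2 < (q.2:ℝ) := by nlinarith
      have l1' : q.2 < p.2 := by exact_mod_cast l1
      have l2' : p.2 - 2 < q.2 := by exact_mod_cast (by push_cast; linarith : ((p.2 - 2 : ℤ):ℝ) < (q.2:ℝ))
      omega
  have : q = (p.1 + i, p.2 + j) := by
    rw [Prod.ext_iff]; exact ⟨hq1, hq2⟩
  rwa [this] at hq

lemma strip_subset_Rnb_h {r ε : ℝ} (hr : 0 < r) (hε : 0 < ε) (hε1 : ε < 1)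
    {C : Finset (ℤ × ℤ)} {p : ℤ × ℤ}
    (hA : vtx r p ∈ interior (Rset r C)) (hB : vtx r (p + (1,0)) ∈ interior (Rset r C)) :
    ∀ u s : ℝ, u ∈ Icc (0:ℝ) 1 → s ∈ Icc (-(ε*r)) (ε*r) →
      vtx r p + u • pt (2*r) 0 + s • pt 1 1 ∈ Rnb r C p (p + (1,0)) := by
  intro u s hu hs
  obtain ⟨hu0, hu1⟩ := hu
  obtain ⟨hs0, hs1⟩ := hs
  set x : E2 := vtx r p + u • pt (2*r) 0 + s • pt 1 1 with hxdef
  have hx0 : x 0 = 2*r*(p.1:ℝ) + (u*(2*r) + s) := by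
    show 2*r*(p.1:ℝ) + u*(2*r) + s*1 = _; ring
  have hx1 : x 1 = 2*r*(p.2:ℝ) + s := by
    show 2*r*(p.2:ℝ) + u*0 + s*1 = _; ring
  have hεr : ε*r < r := by nlinarith
  have hC : ∀ i j : ℤ, (i = 0 ∨ i = -1) → (j = 0 ∨ j = -1) → (p.1 + i, p.2 + j) ∈ C :=
    fun i j hi hj => cell_mem_C_of_interior hr hA i j hi hj
  have hC' : ∀ i j : ℤ, (i = 0 ∨ i = -1) → (j = 0 ∨ j = -1) → (p.1 + 1 + i, p.2 + j) ∈ C := by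
    intro i j hi hj
    have := cell_mem_C_of_interior hr hB i j hi hj
    simpa using this
  have hmemC : ∀ i j : ℤ, (i = 0 ∨ i = -1 ∨ i = 1) → (j = 0 ∨ j = -1) → (p.1 + i, p.2 + j) ∈ C := by
    intro i j hi hj
    rcases hi with h|h|h
    · exact hC i j (Or.inl h) hj
    · exact hC i j (Or.inr h) hj
    · subst h
      have := hC' 0 j (Or.inl rfl) hj
      simpa using this
  have hcorner : ∀ i j : ℤ, (i = 0 ∨ i = -1 ∨ i = 1) → (j = 0 ∨ j = -1) →
      isCorner p (p.1 + i, p.2 + j) ∨ isCorner (p + (1,0)) (p.1 + i, p.2 + j) := by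
    intro i j hi hj
    simp only [isCorner, Prod.ext_iff, Prod.fst_add, Prod.snd_add, Prod.mk_add_mk]
    rcases hi with h|h|h <;> rcases hj with h'|h' <;> subst h <;> subst h' <;> omega
  -- choose indices
  rcases le_or_gt 0 s with hsp | hsn <;>
    [(have hj : (0:ℤ) = 0 ∨ (0:ℤ) = -1 := Or.inl rfl); (have hj : (-1:ℤ) = 0 ∨ (-1:ℤ) = -1 := Or.inr rfl)] <;>
  rcases lt_or_ge (u*(2*r) + s) 0 with hneg | hpos <;>
  [skip; rcases le_or_gt (u*(2*r) + s) (2*r) with hmid | hhi; skip;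
   rcases le_or_gt (u*(2*r) + s) (2*r) with hmid | hhi]
  · -- s ≥ 0, i = -1
    refine mem_Rnb_of_cell (hmemC (-1) 0 (by norm_num) hj) (hcorner (-1) 0 (by norm_num) hj) ?_
    refine ⟨⟨?_, ?_⟩, ⟨?_, ?_⟩⟩
    all_goals first
      | (rw [hx0]; push_cast; nlinarith)
      | (rw [hx1]; push_cast; nlinarith)
  · -- s ≥ 0, i = 0
    refine mem_Rnb_of_cell (hmemC 0 0 (by norm_num) hj) (hcorner 0 0 (by norm_num) hj) ?_
    refine ⟨⟨?_, ?_⟩, ⟨?_, ?_⟩⟩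
    all_goals first
      | (rw [hx0]; push_cast; nlinarith)
      | (rw [hx1]; push_cast; nlinarith)
  · -- s ≥ 0, i = 1
    refine mem_Rnb_of_cell (hmemC 1 0 (by norm_num) hj) (hcorner 1 0 (by norm_num) hj) ?_
    refine ⟨⟨?_, ?_⟩, ⟨?_, ?_⟩⟩
    all_goals first
      | (rw [hx0]; push_cast; nlinarith)
      | (rw [hx1]; push_cast; nlinarith)
  · -- s < 0, i = -1
    refine mem_Rnb_of_cell (hmemC (-1) (-1) (by norm_num) hj) (hcorner (-1) (-1) (by norm_num) hj) ?_
    refine ⟨⟨?_, ?_⟩, ⟨?_, ?_⟩⟩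
    all_goals first
      | (rw [hx0]; push_cast; nlinarith)
      | (rw [hx1]; push_cast; nlinarith)
  · -- s < 0, i = 0
    refine mem_Rnb_of_cell (hmemC 0 (-1) (by norm_num) hj) (hcorner 0 (-1) (by norm_num) hj) ?_
    refine ⟨⟨?_, ?_⟩, ⟨?_, ?_⟩⟩
    all_goals first
      | (rw [hx0]; push_cast; nlinarith)
      | (rw [hx1]; push_cast; nlinarith)
  · -- s < 0, i = 1
    refine mem_Rnb_of_cell (hmemC 1 (-1) (by norm_num) hj) (hcorner 1 (-1) (by norm_num) hj) ?_
    refine ⟨⟨?_, ?_⟩, ⟨?_, ?_⟩⟩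
    all_goals first
      | (rw [hx0]; push_cast; nlinarith)
      | (rw [hx1]; push_cast; nlinarith)

lemma strip_subset_Rnb_v {r ε : ℝ} (hr : 0 < r) (hε : 0 < ε) (hε1 : ε < 1)
    {C : Finset (ℤ × ℤ)} {p : ℤ × ℤ}
    (hA : vtx r p ∈ interior (Rset r C)) (hB : vtx r (p + (0,1)) ∈ interior (Rset r C)) :
    ∀ u s : ℝ, u ∈ Icc (0:ℝ) 1 → s ∈ Icc (-(ε*r)) (ε*r) →
      vtx r p + u • pt 0 (2*r) + s • pt 1 1 ∈ Rnb r C p (p + (0,1)) := by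
  intro u s hu hs
  obtain ⟨hu0, hu1⟩ := hu
  obtain ⟨hs0, hs1⟩ := hs
  set x : E2 := vtx r p + u • pt 0 (2*r) + s • pt 1 1 with hxdef
  have hx0 : x 0 = 2*r*(p.1:ℝ) + s := by
    show 2*r*(p.1:ℝ) + u*0 + s*1 = _; ring
  have hx1 : x 1 = 2*r*(p.2:ℝ) + (u*(2*r) + s) := by
    show 2*r*(p.2:ℝ) + u*(2*r) + s*1 = _; ring
  have hεr : ε*r < r := by nlinarith
  have hC : ∀ i j : ℤ, (i = 0 ∨ i = -1) → (j = 0 ∨ j = -1) → (p.1 + i, p.2 + j) ∈ C :=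
    fun i j hi hj => cell_mem_C_of_interior hr hA i j hi hj
  have hC' : ∀ i j : ℤ, (i = 0 ∨ i = -1) → (j = 0 ∨ j = -1) → (p.1 + i, p.2 + 1 + j) ∈ C := by
    intro i j hi hj
    have := cell_mem_C_of_interior hr hB i j hi hj
    simpa using this
  have hmemC : ∀ i j : ℤ, (i = 0 ∨ i = -1) → (j = 0 ∨ j = -1 ∨ j = 1) → (p.1 + i, p.2 + j) ∈ C := by
    intro i j hi hj
    rcases hj with h|h|h
    · exact hC i j hi (Or.inl h)
    · exact hC i j hi (Or.inr h)
    · subst h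
      have := hC' i 0 hi (Or.inl rfl)
      simpa using this
  have hcorner : ∀ i j : ℤ, (i = 0 ∨ i = -1) → (j = 0 ∨ j = -1 ∨ j = 1) →
      isCorner p (p.1 + i, p.2 + j) ∨ isCorner (p + (0,1)) (p.1 + i, p.2 + j) := by
    intro i j hi hj
    simp only [isCorner, Prod.ext_iff, Prod.fst_add, Prod.snd_add, Prod.mk_add_mk]
    rcases hi with h|h <;> rcases hj with h'|h'|h' <;> subst h <;> subst h' <;> omega
  rcases le_or_gt 0 s with hsp | hsn <;>
    [(have hi : (0:ℤ) = 0 ∨ (0:ℤ) = -1 := Or.inl rfl); (have hi : (-1:ℤ) = 0 ∨ (-1:ℤ) = -1 := Or.inr rfl)] <;>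
  rcases lt_or_ge (u*(2*r) + s) 0 with hneg | hpos <;>
  [skip; rcases le_or_gt (u*(2*r) + s) (2*r) with hmid | hhi; skip;
   rcases le_or_gt (u*(2*r) + s) (2*r) with hmid | hhi]
  · refine mem_Rnb_of_cell (hmemC 0 (-1) hi (by norm_num)) (hcorner 0 (-1) hi (by norm_num)) ?_
    refine ⟨⟨?_, ?_⟩, ⟨?_, ?_⟩⟩
    all_goals first
      | (rw [hx0]; push_cast; nlinarith)
      | (rw [hx1]; push_cast; nlinarith)
  · refine mem_Rnb_of_cell (hmemC 0 0 hi (by norm_num)) (hcorner 0 0 hi (by norm_num)) ?_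
    refine ⟨⟨?_, ?_⟩, ⟨?_, ?_⟩⟩
    all_goals first
      | (rw [hx0]; push_cast; nlinarith)
      | (rw [hx1]; push_cast; nlinarith)
  · refine mem_Rnb_of_cell (hmemC 0 1 hi (by norm_num)) (hcorner 0 1 hi (by norm_num)) ?_
    refine ⟨⟨?_, ?_⟩, ⟨?_, ?_⟩⟩
    all_goals first
      | (rw [hx0]; push_cast; nlinarith)
      | (rw [hx1]; push_cast; nlinarith)
  · refine mem_Rnb_of_cell (hmemC (-1) (-1) hi (by norm_num)) (hcorner (-1) (-1) hi (by norm_num)) ?_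
    refine ⟨⟨?_, ?_⟩, ⟨?_, ?_⟩⟩
    all_goals first
      | (rw [hx0]; push_cast; nlinarith)
      | (rw [hx1]; push_cast; nlinarith)
  · refine mem_Rnb_of_cell (hmemC (-1) 0 hi (by norm_num)) (hcorner (-1) 0 hi (by norm_num)) ?_
    refine ⟨⟨?_, ?_⟩, ⟨?_, ?_⟩⟩
    all_goals first
      | (rw [hx0]; push_cast; nlinarith)
      | (rw [hx1]; push_cast; nlinarith)
  · refine mem_Rnb_of_cell (hmemC (-1) 1 hi (by norm_num)) (hcorner (-1) 1 hi (by norm_num)) ?_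
    refine ⟨⟨?_, ?_⟩, ⟨?_, ?_⟩⟩
    all_goals first
      | (rw [hx0]; push_cast; nlinarith)
      | (rw [hx1]; push_cast; nlinarith)

lemma fiber_bound {c r u X : ℝ} (hr : 0 < r) (hc : 0 < c) (hcr : c < r) (hu : u ∈ Icc (0:ℝ) 1)
    (hX : 2*c/5 ≤ X)
    {e : E2} (hσ : ∀ t : ℝ, ‖e + t • pt 1 1‖^2 = 4*r^2 + 4*r*t + 2*t^2)
    {O : Set ℝ} (hOm : MeasurableSet O) (hOsub : O ⊆ Icc (-c) c)
    (hvolO : volume O = ENNReal.ofReal X)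
    {BB : Set (ℝ × ℝ)} (hBBsub : ∀ q : ℝ × ℝ, q ∈ BB → q.1 ∈ O ∧ q.2 ∈ Icc (-c) c)
    (s : ℝ) :
    (∫⁻ t : ℝ, BB.indicator (fun _ => (1:ℝ≥0∞)) (s - u*t, s - u*t + t)
        * (‖e + t • pt 1 1‖₊ : ℝ≥0∞))
      ≤ ENNReal.ofReal (2*r*(X + 2*c) + (5/2)*c^2) := by
  obtain ⟨hu0, hu1⟩ := hu
  have hXpos : 0 < X := lt_of_lt_of_le (by positivity) hX
  set F1 : Set ℝ := {t : ℝ | s + (-u) * t ∈ O} with hF1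
  set F2 : Set ℝ := {t : ℝ | s + (1-u) * t ∈ Icc (-c) c} with hF2
  have hptw : ∀ t : ℝ,
      BB.indicator (fun _ => (1:ℝ≥0∞)) (s - u*t, s - u*t + t) * (‖e + t • pt 1 1‖₊ : ℝ≥0∞)
        ≤ (F1 ∩ F2).indicator (fun _ => ENNReal.ofReal (2*r)) t
          + (Icc (0:ℝ) (2*c)).indicator (fun t => ENNReal.ofReal ((5/4)*t)) t := by
    intro t
    by_cases hq : (s - u*t, s - u*t + t) ∈ BB
    · obtain ⟨hqO, hqI⟩ := hBBsub _ hq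
      simp only at hqO hqI
      have haI : s - u*t ∈ Icc (-c) c := hOsub hqO
      have ht2c : -(2*c) ≤ t ∧ t ≤ 2*c := by
        obtain ⟨l1, l2⟩ := haI; obtain ⟨l3, l4⟩ := hqI
        constructor <;> linarith
      have htF1 : t ∈ F1 := by
        simp only [hF1, Set.mem_setOf_eq]
        have : s + (-u) * t = s - u*t := by ring
        rw [this]; exact hqO
      have htF2 : t ∈ F2 := by
        simp only [hF2, Set.mem_setOf_eq]
        have : s + (1-u) * t = s - u*t + t := by ring
        rw [this]; exact hqI
      rw [Set.indicator_of_mem hq, one_mul]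
      rw [Set.indicator_of_mem (Set.mem_inter htF1 htF2)]
      -- norm bound
      have hnorm : ‖e + t • pt 1 1‖ ≤ 2*r + (5/4) * max t 0 := by
        have hmax0 : 0 ≤ max t 0 := le_max_right t 0
        have hmaxle : max t 0 ≤ 2*c := max_le ht2c.2 (by linarith)
        have hsq : ‖e + t • pt 1 1‖^2 ≤ (2*r + (5/4) * max t 0)^2 := by
          rw [hσ t]
          rcases le_or_gt t 0 with h | h
          · rw [max_eq_right h]
            nlinarith [ht2c.1, ht2c.2]
          · rw [max_eq_left h.le]
            nlinarith [ht2c.1, ht2c.2]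
        calc ‖e + t • pt 1 1‖ = Real.sqrt (‖e + t • pt 1 1‖^2) :=
              (Real.sqrt_sq (norm_nonneg _)).symm
          _ ≤ Real.sqrt ((2*r + (5/4) * max t 0)^2) := Real.sqrt_le_sqrt hsq
          _ = 2*r + (5/4) * max t 0 := Real.sqrt_sq (by nlinarith)
      have hcoe : (‖e + t • pt 1 1‖₊ : ℝ≥0∞) = ENNReal.ofReal ‖e + t • pt 1 1‖ :=
        (by rw [ofReal_norm, enorm_eq_nnnorm])
      rw [hcoe]
      rcases le_or_gt t 0 with h | h
      · have : ENNReal.ofReal ‖e + t • pt 1 1‖ ≤ ENNReal.ofReal (2*r) := by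
          apply ENNReal.ofReal_le_ofReal
          rw [max_eq_right h] at hnorm; linarith
        exact le_trans this (le_add_of_nonneg_right (zero_le))
      · have htI : t ∈ Icc (0:ℝ) (2*c) := ⟨h.le, ht2c.2⟩
        rw [Set.indicator_of_mem htI]
        rw [← ENNReal.ofReal_add (by linarith) (by positivity)]
        apply ENNReal.ofReal_le_ofReal
        rw [max_eq_left h.le] at hnorm; linarith
    · rw [Set.indicator_of_notMem hq, zero_mul]
      exact zero_le
  calc (∫⁻ t : ℝ, BB.indicator (fun _ => (1:ℝ≥0∞)) (s - u*t, s - u*t + t)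
        * (‖e + t • pt 1 1‖₊ : ℝ≥0∞))
      ≤ ∫⁻ t : ℝ, ((F1 ∩ F2).indicator (fun _ => ENNReal.ofReal (2*r)) t
          + (Icc (0:ℝ) (2*c)).indicator (fun t => ENNReal.ofReal ((5/4)*t)) t) :=
        lintegral_mono hptw
    _ = (∫⁻ t : ℝ, (F1 ∩ F2).indicator (fun _ => ENNReal.ofReal (2*r)) t)
          + ∫⁻ t : ℝ, (Icc (0:ℝ) (2*c)).indicator (fun t => ENNReal.ofReal ((5/4)*t)) t := by
        apply lintegral_add_left
        apply Measurable.indicator measurable_const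
        apply MeasurableSet.inter
        · exact (measurable_const.add (measurable_id.const_mul (-u))) hOm
        · exact (measurable_const.add (measurable_id.const_mul (1-u))) measurableSet_Icc
    _ ≤ ENNReal.ofReal (2*r) * ENNReal.ofReal (X + 2*c) + ENNReal.ofReal ((5/2)*c^2) := by
        apply add_le_add
        · -- first piece
          have hmF : MeasurableSet (F1 ∩ F2) := by
            apply MeasurableSet.inter
            · exact (measurable_const.add (measurable_id.const_mul (-u))) hOm
            · exact (measurable_const.add (measurable_id.const_mul (1-u))) measurableSet_Icc
          rw [lintegral_indicator hmF, setLIntegral_const]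
          have hF12 : volume (F1 ∩ F2) ≤ ENNReal.ofReal (X + 2*c) := by
            rcases le_or_gt (u * (X + 2*c)) X with hcase | hcase
            · -- use F2 ; here 1 - u > 0
              have h1u : 0 < 1 - u := by nlinarith
              have hsub2 : F1 ∩ F2 ⊆ F2 := Set.inter_subset_right
              have hv2 : volume F2 = ENNReal.ofReal |1-u|⁻¹ * volume (Icc (-c) c) := by
                rw [hF2]
                have : {t : ℝ | s + (1-u) * t ∈ Icc (-c) c}
                    = {t : ℝ | s + (1-u) * t ∈ Icc (-c) c} := rfl
                exact vol_preimage_affine (1-u) s h1u.ne' (Icc (-c) c) measurableSet_Icc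
              calc volume (F1 ∩ F2) ≤ volume F2 := measure_mono hsub2
                _ = ENNReal.ofReal |1-u|⁻¹ * ENNReal.ofReal (2*c) := by
                    rw [hv2, Real.volume_Icc]; congr 1; ring_nf
                _ = ENNReal.ofReal ((1-u)⁻¹ * (2*c)) := by
                    rw [← ENNReal.ofReal_mul (by positivity), abs_of_pos h1u]
                _ ≤ ENNReal.ofReal (X + 2*c) := by
                    apply ENNReal.ofReal_le_ofReal
                    rw [inv_mul_le_iff₀ h1u]
                    nlinarith
            · -- use F1 ; here u > 0
              have hupos : 0 < u := by nlinarith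
              have hsub1 : F1 ∩ F2 ⊆ F1 := Set.inter_subset_left
              have hv1 : volume F1 = ENNReal.ofReal |(-u)|⁻¹ * volume O :=
                vol_preimage_affine (-u) s (by simpa using hupos.ne') O hOm
              calc volume (F1 ∩ F2) ≤ volume F1 := measure_mono hsub1
                _ = ENNReal.ofReal u⁻¹ * ENNReal.ofReal X := by
                    rw [hv1, hvolO, abs_neg, abs_of_pos hupos]
                _ = ENNReal.ofReal (u⁻¹ * X) := by
                    rw [← ENNReal.ofReal_mul (by positivity)]
                _ ≤ ENNReal.ofReal (X + 2*c) := by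
                    apply ENNReal.ofReal_le_ofReal
                    rw [inv_mul_le_iff₀ hupos]
                    nlinarith
          exact mul_le_mul_right hF12 _
        · -- second piece
          rw [lintegral_indicator measurableSet_Icc]
          have hint : IntegrableOn (fun t : ℝ => (5/4)*t) (Icc (0:ℝ) (2*c)) volume :=
            (continuous_const.mul continuous_id).integrableOn_Icc
          rw [← ofReal_integral_eq_lintegral_ofReal hint]
          · apply ENNReal.ofReal_le_ofReal
            rw [MeasureTheory.integral_Icc_eq_integral_Ioc,
              ← intervalIntegral.integral_of_le (by positivity : (0:ℝ) ≤ 2*c)]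
            rw [intervalIntegral.integral_const_mul, integral_id]
            norm_num
            nlinarith
          · apply (ae_restrict_iff' measurableSet_Icc).2
            refine ae_of_all _ fun t ht => ?_
            simp only [Pi.zero_apply]
            have := ht.1
            positivity
    _ = ENNReal.ofReal (2*r*(X + 2*c) + (5/2)*c^2) := by
        rw [← ENNReal.ofReal_mul (by positivity), ← ENNReal.ofReal_add (by positivity) (by positivity)]


lemma core_lemma (r ε : ℝ) (hr : 0 < r) (hε : 0 < ε) (hε1 : ε < 1)
    (A e : E2)
    (hσ : ∀ t : ℝ, ‖e + t • pt 1 1‖^2 = 4*r^2 + 4*r*t + 2*t^2)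
    (g : E2 → ℝ≥0∞) (hg : Measurable g) (Gtot : ℝ≥0∞) (hGtop : Gtot ≠ ⊤)
    (hGb : ∫⁻ u in Icc (0:ℝ) 1, ∫⁻ s in Icc (-(ε*r)) (ε*r),
        g (A + u • e + s • pt 1 1) ∂volume ∂volume ≤ ENNReal.ofReal (2*r)⁻¹ * Gtot) :
    μH[1] {x ∈ IsegA r ε A |
        μH[1] {y ∈ IsegA r ε (A + e) |
            ENNReal.ofReal (25/(ε*r)) * Gtot < ∫⁻ t in segment ℝ x y, g t ∂μH[1]}
          > μH[1] (IsegA r ε (A + e)) / 5}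
      < μH[1] (IsegA r ε A) / 5 := by
  classical
  set c : ℝ := ε * r with hc
  have hcpos : 0 < c := mul_pos hε hr
  have hcr : c < r := by rw [hc]; nlinarith
  set v : E2 := pt 1 1 with hv
  have hvne : v ≠ 0 := by
    intro h
    have h1 : v 0 = (0 : E2) 0 := by rw [h]
    have : (1:ℝ) = 0 := h1
    norm_num at this
  have hv0 : (‖v‖₊ : ℝ≥0∞) ≠ 0 := by simpa using hvne
  have hvtop : (‖v‖₊ : ℝ≥0∞) ≠ ⊤ := ENNReal.coe_ne_top
  have hyxne : ∀ t : ℝ, e + t • v ≠ 0 := by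
    intro t h
    have h2 := hσ t
    rw [hv] at h
    rw [h, norm_zero] at h2
    norm_num at h2
    nlinarith [sq_nonneg (2*r + t), sq_nonneg t, mul_pos hr hr]
  set κa : ℝ → E2 := fun t => A + t • v with hκa
  set κb : ℝ → E2 := fun t => (A + e) + t • v with hκb
  set τ : ℝ≥0∞ := ENNReal.ofReal (25/(ε*r)) * Gtot with hτ
  set σn : ℝ → ℝ≥0∞ := fun t => (‖e + t • v‖₊ : ℝ≥0∞) with hσn
  set Lf : ℝ → ℝ → ℝ≥0∞ :=
    fun a b => σn (b-a) * ∫⁻ u in Icc (0:ℝ) 1, g (κa a + u • (e + (b-a) • v)) with hLf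
  have hyx : ∀ a b : ℝ, κb b - κa a = e + (b - a) • v := by
    intro a b
    show (A + e) + b • v - (A + a • v) = e + (b - a) • v
    module
  have hseg : ∀ a b : ℝ, (∫⁻ t in segment ℝ (κa a) (κb b), g t ∂μH[1]) = Lf a b := by
    intro a b
    have h1 := lintegral_segment (κa a) (κb b) (by rw [hyx]; exact hyxne _) hg
    rw [hyx a b] at h1
    exact h1
  -- parametrized descriptions of the segments
  have hIA : IsegA r ε A = κa '' Icc (-c) c := by
    rw [IsegA, ← hv, ← hc]
    exact segment_eq_line_image A hcpos
  have hIB : IsegA r ε (A + e) = κb '' Icc (-c) c := by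
    rw [IsegA, ← hv, ← hc]
    exact segment_eq_line_image (A + e) hcpos
  have hμA : ∀ S : Set ℝ, μH[1] (κa '' S) = (‖v‖₊ : ℝ≥0∞) * volume S :=
    fun S => hausdorff_image_line hvne A S
  have hμB : ∀ S : Set ℝ, μH[1] (κb '' S) = (‖v‖₊ : ℝ≥0∞) * volume S :=
    fun S => hausdorff_image_line hvne (A + e) S
  set Y : ℝ → Set ℝ := fun a => {b ∈ Icc (-c) c | τ < Lf a b} with hY
  have hinner : ∀ a : ℝ,
      {y ∈ IsegA r ε (A + e) | τ < ∫⁻ t in segment ℝ (κa a) y, g t ∂μH[1]} = κb '' (Y a) := by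
    intro a
    rw [hIB, image_sep (line_injective hvne (A+e)) _ _]
    apply congrArg (Set.image κb)
    ext b
    simp only [Set.mem_setOf_eq, hY]
    rw [hseg a b]
  have hμIB : μH[1] (IsegA r ε (A + e)) = (‖v‖₊ : ℝ≥0∞) * ENNReal.ofReal (2*c) := by
    rw [hIB, hμB, Real.volume_Icc]
    congr 1
    ring_nf
  have hμIA : μH[1] (IsegA r ε A) = (‖v‖₊ : ℝ≥0∞) * ENNReal.ofReal (2*c) := by
    rw [hIA, hμA, Real.volume_Icc]
    congr 1
    ring_nf
  set O : Set ℝ := {a ∈ Icc (-c) c | ENNReal.ofReal (2*c) / 5 < volume (Y a)} with hO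
  have hcond : ∀ a : ℝ,
      (μH[1] (IsegA r ε (A + e)) / 5 < μH[1] (κb '' (Y a)))
        ↔ (ENNReal.ofReal (2*c) / 5 < volume (Y a)) := by
    intro a
    rw [hμIB, hμB, mul_div_assoc]
    exact ENNReal.mul_lt_mul_iff_right hv0 hvtop
  have houter : {x ∈ IsegA r ε A |
      μH[1] {y ∈ IsegA r ε (A + e) | τ < ∫⁻ t in segment ℝ x y, g t ∂μH[1]}
        > μH[1] (IsegA r ε (A + e)) / 5} = κa '' O := by
    rw [hIA, image_sep (line_injective hvne A) _ _]
    apply congrArg (Set.image κa)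
    ext a
    simp only [Set.mem_setOf_eq, hO]
    constructor
    · rintro ⟨ha, hgt⟩
      refine ⟨ha, ?_⟩
      rw [hinner a] at hgt
      exact (hcond a).1 hgt
    · rintro ⟨ha, hlt⟩
      refine ⟨ha, ?_⟩
      rw [hinner a]
      exact (hcond a).2 hlt
  -- contradiction
  rw [houter, hμIA]
  by_contra hcon
  push_neg at hcon
  rw [hμA] at hcon
  have hOv : ENNReal.ofReal (2*c) / 5 ≤ volume O := by
    rw [mul_div_assoc] at hcon
    exact (ENNReal.mul_le_mul_iff_right hv0 hvtop).1 hcon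
  -- measurability
  have hκam : Measurable κa := by
    simp only [hκa]; fun_prop
  have hzm : Measurable (fun p : (ℝ × ℝ) × ℝ => g (κa p.1.1 + p.2 • (e + (p.1.2 - p.1.1) • v))) := by
    apply hg.comp
    simp only [hκa]
    fun_prop
  have hσnm1 : Measurable σn := by
    simp only [hσn]
    apply Measurable.coe_nnreal_ennreal
    apply Measurable.nnnorm
    fun_prop
  have hσnm : Measurable (fun q : ℝ × ℝ => σn (q.2 - q.1)) :=
    hσnm1.comp (measurable_snd.sub measurable_fst)
  have hLm : Measurable (fun q : ℝ × ℝ => Lf q.1 q.2) := by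
    simp only [hLf]
    exact Measurable.mul hσnm hzm.lintegral_prod_right'
  have hBB0m : MeasurableSet {q : ℝ × ℝ | q.2 ∈ Icc (-c) c ∧ τ < Lf q.1 q.2} := by
    apply MeasurableSet.inter
    · exact measurable_snd measurableSet_Icc
    · exact hLm measurableSet_Ioi
  have hYm : Measurable fun a => volume (Y a) := by
    have hvolY : (fun a => volume (Y a))
        = fun a => volume (Prod.mk a ⁻¹' {q : ℝ × ℝ | q.2 ∈ Icc (-c) c ∧ τ < Lf q.1 q.2}) := by
      funext a
      rfl
    rw [hvolY]
    exact measurable_measure_prodMk_left hBB0m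
  have hOm : MeasurableSet O := by
    have : O = Icc (-c) c ∩ {a : ℝ | ENNReal.ofReal (2*c) / 5 < volume (Y a)} := rfl
    rw [this]
    exact measurableSet_Icc.inter (hYm measurableSet_Ioi)
  set BB : Set (ℝ × ℝ) := {q | q.1 ∈ O ∧ q.2 ∈ Icc (-c) c ∧ τ < Lf q.1 q.2} with hBBdef
  have hBBm : MeasurableSet BB := by
    have : BB = (Prod.fst ⁻¹' O) ∩ {q : ℝ × ℝ | q.2 ∈ Icc (-c) c ∧ τ < Lf q.1 q.2} := rfl
    rw [this]
    exact (measurable_fst hOm).inter hBB0m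
  have hBBsub : ∀ q : ℝ × ℝ, q ∈ BB → q.1 ∈ O ∧ q.2 ∈ Icc (-c) c := fun q hq => ⟨hq.1, hq.2.1⟩
  have hOsub : O ⊆ Icc (-c) c := fun a ha => ha.1
  have hOfin : volume O ≠ ⊤ := by
    have h1 : volume O ≤ volume (Icc (-c) c) := measure_mono hOsub
    rw [Real.volume_Icc] at h1
    exact (lt_of_le_of_lt h1 ENNReal.ofReal_lt_top).ne
  set X : ℝ := (volume O).toReal with hXdef
  have hvolO : volume O = ENNReal.ofReal X := (ENNReal.ofReal_toReal hOfin).symm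
  have h2c5 : ENNReal.ofReal (2*c) / 5 = ENNReal.ofReal (2*c/5) := by
    rw [ENNReal.ofReal_div_of_pos (by norm_num : (0:ℝ) < 5)]
    norm_num
  have hX25 : 2*c/5 ≤ X := by
    have h1 := hOv
    rw [hvolO, h2c5] at h1
    exact (ENNReal.ofReal_le_ofReal_iff ENNReal.toReal_nonneg).1 h1
  have hXpos : 0 < X := lt_of_lt_of_le (by positivity) hX25
  -- D and its lower bound
  set W : ℝ × ℝ → ℝ≥0∞ := fun q => BB.indicator (fun q => Lf q.1 q.2) q with hWdef
  have hWm : Measurable W := hLm.indicator hBBm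
  set D : ℝ≥0∞ := ∫⁻ q, W q ∂(volume.prod volume) with hDdef
  have hprodBB : ENNReal.ofReal (2*c) / 5 * volume O ≤ (volume.prod volume) BB := by
    rw [Measure.prod_apply hBBm]
    have hpt : ∀ a : ℝ, O.indicator (fun _ => ENNReal.ofReal (2*c) / 5) a
        ≤ volume (Prod.mk a ⁻¹' BB) := by
      intro a
      by_cases ha : a ∈ O
      · rw [Set.indicator_of_mem ha]
        have hsec : Prod.mk a ⁻¹' BB = Y a := by
          ext b
          simp only [Set.mem_preimage, hBBdef, Set.mem_setOf_eq, hY, ha, true_and]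
        rw [hsec]
        exact ha.2.le
      · rw [Set.indicator_of_notMem ha]
        exact zero_le
    calc ENNReal.ofReal (2*c)/5 * volume O
        = ∫⁻ a, O.indicator (fun _ => ENNReal.ofReal (2*c) / 5) a := by
          rw [lintegral_indicator hOm, setLIntegral_const]
      _ ≤ ∫⁻ a, volume (Prod.mk a ⁻¹' BB) := lintegral_mono hpt
  have hDlow : τ * (ENNReal.ofReal (2*c) / 5 * volume O) ≤ D := by
    calc τ * (ENNReal.ofReal (2*c)/5 * volume O) ≤ τ * (volume.prod volume) BB :=
          mul_le_mul_right hprodBB τ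
      _ = ∫⁻ _ in BB, τ ∂(volume.prod volume) := by rw [setLIntegral_const, mul_comm]
      _ ≤ ∫⁻ q in BB, Lf q.1 q.2 ∂(volume.prod volume) :=
          setLIntegral_mono' hBBm fun q hq => hq.2.2.le
      _ = D := by rw [hDdef, ← lintegral_indicator hBBm]
  -- upper bound
  set ζ : ℝ → ℝ → E2 := fun u s => A + u • e + s • v with hζ
  set K : ℝ≥0∞ := ENNReal.ofReal (2*r*(X + 2*c) + (5/2)*c^2) with hK
  have hKtop : K ≠ ⊤ := by rw [hK]; exact ENNReal.ofReal_ne_top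
  set χ : ℝ × ℝ → ℝ≥0∞ := fun q => BB.indicator (fun _ => (1:ℝ≥0∞)) q with hχ
  have hχm : Measurable χ := measurable_const.indicator hBBm
  have hWeq : ∀ q : ℝ × ℝ, W q = ∫⁻ u in Icc (0:ℝ) 1,
      χ q * σn (q.2 - q.1) * g (κa q.1 + u • (e + (q.2 - q.1) • v)) := by
    intro q
    by_cases hq : q ∈ BB
    · have hχ1 : χ q = 1 := by simp only [hχ]; rw [Set.indicator_of_mem hq]
      simp only [hWdef, hχ1, one_mul]
      rw [Set.indicator_of_mem hq]
      simp only [hLf]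
      exact (lintegral_const_mul' _ _ ENNReal.coe_ne_top).symm
    · have hχ0 : χ q = 0 := by simp only [hχ]; rw [Set.indicator_of_notMem hq]
      simp only [hWdef, hχ0, zero_mul]
      rw [Set.indicator_of_notMem hq]
      simp
  have hintm : Measurable (Function.uncurry fun (q : ℝ × ℝ) (u : ℝ) =>
      χ q * σn (q.2 - q.1) * g (κa q.1 + u • (e + (q.2 - q.1) • v))) := by
    apply Measurable.mul
    · exact ((hχm.comp measurable_fst).mul (hσnm.comp measurable_fst))
    · exact hzm
  have hD2 : D = ∫⁻ u in Icc (0:ℝ) 1, ∫⁻ q,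
      χ q * σn (q.2 - q.1) * g (κa q.1 + u • (e + (q.2 - q.1) • v)) ∂(volume.prod volume) := by
    rw [hDdef, lintegral_congr hWeq]
    exact lintegral_lintegral_swap hintm.aemeasurable
  have hTbound : ∀ u ∈ Icc (0:ℝ) 1,
      (∫⁻ q, χ q * σn (q.2 - q.1) * g (κa q.1 + u • (e + (q.2 - q.1) • v))
          ∂(volume.prod volume))
        ≤ K * ∫⁻ s in Icc (-c) c, g (ζ u s) := by
    intro u hu
    have hm1 : Measurable fun q : ℝ × ℝ =>
        χ q * σn (q.2 - q.1) * g (κa q.1 + u • (e + (q.2-q.1) • v)) := by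
      apply Measurable.mul (hχm.mul hσnm)
      apply hg.comp
      simp only [hκa]
      fun_prop
    have hm2 : Measurable (Function.uncurry fun (a t : ℝ) =>
        χ (a, a+t) * σn t * g (κa a + u • (e + t • v))) := by
      apply Measurable.mul
      · apply Measurable.mul
        · exact hχm.comp (measurable_fst.prodMk (measurable_fst.add measurable_snd))
        · exact hσnm1.comp measurable_snd
      · apply hg.comp
        simp only [hκa]
        fun_prop
    have hm3 : Measurable (Function.uncurry fun (t s : ℝ) =>
        χ (s - u*t, s - u*t + t) * σn t * g (ζ u s)) := by
      apply Measurable.mul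
      · apply Measurable.mul
        · refine hχm.comp (Measurable.prodMk ?_ ?_) <;> fun_prop
        · exact hσnm1.comp measurable_fst
      · apply hg.comp
        simp only [hζ]
        fun_prop
    calc (∫⁻ q, χ q * σn (q.2 - q.1) * g (κa q.1 + u • (e + (q.2-q.1) • v))
          ∂(volume.prod volume))
        = ∫⁻ a, ∫⁻ b, χ (a,b) * σn (b - a) * g (κa a + u • (e + (b-a) • v)) ∂volume ∂volume :=
          lintegral_prod _ hm1.aemeasurable
      _ = ∫⁻ a, ∫⁻ t, χ (a,a+t) * σn t * g (κa a + u • (e + t • v)) ∂volume ∂volume := by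
          apply lintegral_congr; intro a
          rw [← lintegral_add_left_eq_self
            (fun b => χ (a,b) * σn (b-a) * g (κa a + u • (e + (b-a) • v))) a]
          apply lintegral_congr; intro t
          simp only [add_sub_cancel_left]
      _ = ∫⁻ t, ∫⁻ a, χ (a,a+t) * σn t * g (κa a + u • (e + t • v)) ∂volume ∂volume :=
          lintegral_lintegral_swap hm2.aemeasurable
      _ = ∫⁻ t, ∫⁻ s, χ (s - u*t, s - u*t + t) * σn t * g (ζ u s) ∂volume ∂volume := by
          apply lintegral_congr; intro t
          rw [← lintegral_add_left_eq_self
            (fun a => χ (a,a+t) * σn t * g (κa a + u • (e + t • v))) (-(u*t))]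
          apply lintegral_congr; intro s
          have h1 : -(u*t) + s = s - u*t := by ring
          rw [h1]
          have h2 : κa (s - u*t) + u • (e + t • v) = ζ u s := by
            show A + (s - u*t) • v + u • (e + t • v) = A + u • e + s • v
            module
          rw [h2]
      _ = ∫⁻ s, ∫⁻ t, χ (s - u*t, s - u*t + t) * σn t * g (ζ u s) ∂volume ∂volume :=
          lintegral_lintegral_swap hm3.aemeasurable
      _ = ∫⁻ s, (∫⁻ t, χ (s - u*t, s - u*t + t) * σn t) * g (ζ u s) ∂volume := by
          apply lintegral_congr; intro s
          refine lintegral_mul_const _ ?_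
          apply Measurable.mul
          · refine hχm.comp (Measurable.prodMk ?_ ?_) <;> fun_prop
          · exact hσnm1
      _ ≤ ∫⁻ s, (Icc (-c) c).indicator (fun s => K * g (ζ u s)) s ∂volume := by
          apply lintegral_mono; intro s
          by_cases hsI : s ∈ Icc (-c) c
          · rw [Set.indicator_of_mem hsI]
            apply mul_le_mul_left
            rw [hK]
            exact fiber_bound hr hcpos hcr hu hX25 hσ hOm hOsub hvolO hBBsub s
          · rw [Set.indicator_of_notMem hsI]
            show (∫⁻ t, χ (s - u*t, s - u*t + t) * σn t) * g (ζ u s) ≤ 0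
            have hz0 : ∀ t : ℝ, χ (s - u*t, s - u*t + t) * σn t = 0 := by
              intro t
              have hnot : (s - u*t, s - u*t + t) ∉ BB := by
                intro hmem
                obtain ⟨h1, h2⟩ := hBBsub _ hmem
                have h1' := hOsub h1
                simp only at h1' h2
                obtain ⟨hu0, hu1⟩ := hu
                exact hsI ⟨by nlinarith [h1'.1, h1'.2, h2.1, h2.2],
                  by nlinarith [h1'.1, h1'.2, h2.1, h2.2]⟩
              simp only [hχ]
              rw [Set.indicator_of_notMem hnot, zero_mul]
            have h00 : (∫⁻ t, χ (s - u*t, s - u*t + t) * σn t) = 0 := by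
              rw [lintegral_congr hz0, lintegral_zero]
            rw [h00, zero_mul]
      _ = K * ∫⁻ s in Icc (-c) c, g (ζ u s) := by
          rw [lintegral_indicator measurableSet_Icc]
          exact lintegral_const_mul' _ _ hKtop
  have hDup : D ≤ K * (ENNReal.ofReal (2*r)⁻¹ * Gtot) := by
    rw [hD2]
    calc (∫⁻ u in Icc (0:ℝ) 1, ∫⁻ q,
          χ q * σn (q.2 - q.1) * g (κa q.1 + u • (e + (q.2-q.1) • v)) ∂(volume.prod volume))
        ≤ ∫⁻ u in Icc (0:ℝ) 1, K * ∫⁻ s in Icc (-c) c, g (ζ u s) :=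
          setLIntegral_mono' measurableSet_Icc hTbound
      _ = K * ∫⁻ u in Icc (0:ℝ) 1, ∫⁻ s in Icc (-c) c, g (ζ u s) :=
          lintegral_const_mul' _ _ hKtop
      _ ≤ K * (ENNReal.ofReal (2*r)⁻¹ * Gtot) := mul_le_mul_right hGb K
  -- endgame
  rcases eq_or_ne Gtot 0 with hG0 | hGne
  · have hτ0 : τ = 0 := by rw [hτ, hG0, mul_zero]
    have hD0 : D = 0 := by
      have h1 := hDup
      rw [hG0, mul_zero, mul_zero] at h1
      exact le_antisymm h1 (zero_le)
    have hae := (lintegral_eq_zero_iff hWm).1 (by rw [← hDdef]; exact hD0)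
    have hsupp : (volume.prod volume) {q | ¬ (W q = 0)} = 0 := ae_iff.1 hae
    have hBB0 : (volume.prod volume) BB = 0 := by
      apply measure_mono_null ?_ hsupp
      intro q hq
      simp only [Set.mem_setOf_eq]
      have hlt : τ < Lf q.1 q.2 := hq.2.2
      rw [hτ0] at hlt
      have hWq : W q = Lf q.1 q.2 := by
        simp only [hWdef]; rw [Set.indicator_of_mem hq]
      rw [hWq]
      exact hlt.ne'
    have h1 := hprodBB
    rw [hBB0] at h1
    have hposBB : (0:ℝ≥0∞) < ENNReal.ofReal (2*c)/5 * volume O := by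
      apply ENNReal.mul_pos
      · rw [h2c5]
        exact (ENNReal.ofReal_pos.2 (by positivity)).ne'
      · rw [hvolO]
        exact (ENNReal.ofReal_pos.2 hXpos).ne'
    exact absurd (le_antisymm h1 (zero_le)) hposBB.ne'
  · have hchain := hDlow.trans hDup
    have hLeq : τ * (ENNReal.ofReal (2*c)/5 * volume O) = ENNReal.ofReal (10*X) * Gtot := by
      rw [hτ, h2c5, hvolO]
      rw [← ENNReal.ofReal_mul (by positivity : (0:ℝ) ≤ 2*c/5)]
      rw [mul_comm (ENNReal.ofReal (25/(ε*r))) Gtot, mul_assoc,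
        ← ENNReal.ofReal_mul (by positivity : (0:ℝ) ≤ 25/(ε*r))]
      rw [mul_comm Gtot _]
      congr 1
      rw [hc]
      field_simp
      ring
    have hReq : K * (ENNReal.ofReal (2*r)⁻¹ * Gtot)
        = ENNReal.ofReal ((2*r*(X + 2*c) + (5/2)*c^2) * (2*r)⁻¹) * Gtot := by
      rw [hK, ← mul_assoc, ← ENNReal.ofReal_mul (by nlinarith [hXpos, hcpos] : (0:ℝ) ≤ 2*r*(X + 2*c) + (5/2)*c^2)]
    rw [hLeq, hReq] at hchain
    have hreal : 10*X ≤ (2*r*(X + 2*c) + (5/2)*c^2) * (2*r)⁻¹ := by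
      have h1 := (ENNReal.mul_le_mul_iff_left hGne hGtop).1 hchain
      refine (ENNReal.ofReal_le_ofReal_iff ?_).1 h1
      have hX0 : (0:ℝ) ≤ X := ENNReal.toReal_nonneg
      have hnn : (0:ℝ) ≤ 2*r*(X + 2*c) + (5/2)*c^2 := by nlinarith
      exact mul_nonneg hnn (by positivity)
    rw [← div_eq_mul_inv, le_div_iff₀ (by linarith : (0:ℝ) < 2*r)] at hreal
    have h1 : r*(2*c/5) ≤ r*X := by nlinarith [hX25, hr]
    have h2 : c*c < c*r := by nlinarith [hcr, hcpos]
    nlinarith [hreal, h1, h2]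


theorem statement_9' (r : ℝ) (hr : 0 < r) (C : Finset (ℤ × ℤ)) (f : E2 → E2)
    (hf : MemW11 (Rset r C) f) (ε : ℝ) (hε : 0 < ε) (hε1 : ε < 1)
    (p d : ℤ × ℤ) (hd : d = (1,0) ∨ d = (0,1)) (hedge : isEdge C p (p + d))
    (hA : vtx r p ∈ interior (Rset r C)) (hB : vtx r (p + d) ∈ interior (Rset r C))
    (M : E2 →L[ℝ] E2) :
    μH[1] {x ∈ IsegA r ε (vtx r p) |
        μH[1] {y ∈ IsegA r ε (vtx r (p + d)) |
            ENNReal.ofReal ((25/(ε*r)) * ∫ z in Rnb r C p (p + d), ‖fderiv ℝ f z - M‖)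
              < ∫⁻ t in segment ℝ x y, (‖fderiv ℝ f t - M‖₊ : ℝ≥0∞) ∂μH[1]}
          > μH[1] (IsegA r ε (vtx r (p + d))) / 5}
      < μH[1] (IsegA r ε (vtx r p)) / 5 := by
  set g : E2 → ℝ≥0∞ := fun z => (‖fderiv ℝ f z - M‖₊ : ℝ≥0∞) with hgdef
  have hg : Measurable g := by
    apply Measurable.coe_nnreal_ennreal
    apply Measurable.nnnorm
    exact (measurable_fderiv ℝ f).sub measurable_const
  have hsub := Rnb_subset_Rset r C p (p + d)
  have hRfin : volume (Rnb r C p (p + d)) < ⊤ :=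
    lt_of_le_of_lt (measure_mono hsub) (Rset_volume_lt_top r C)
  have hMint : IntegrableOn (fun z => fderiv ℝ f z - M) (Rnb r C p (p + d)) volume :=
    (hf.2.2.mono_set hsub).sub (integrableOn_const hRfin.ne)
  set Gtot : ℝ≥0∞ := ∫⁻ z in Rnb r C p (p + d), g z with hGdef
  have hGtop : Gtot ≠ ⊤ := hMint.2.ne
  have hthresh : ENNReal.ofReal ((25/(ε*r)) * ∫ z in Rnb r C p (p + d), ‖fderiv ℝ f z - M‖)
      = ENNReal.ofReal (25/(ε*r)) * Gtot := by
    rw [ENNReal.ofReal_mul (by positivity)]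
    congr 1
    exact ofReal_integral_norm_eq_lintegral_enorm hMint
  have hnormsq : ∀ x : E2, ‖x‖^2 = (x 0)^2 + (x 1)^2 := by
    intro x
    rw [EuclideanSpace.norm_eq, Real.sq_sqrt (by positivity)]
    simp [Fin.sum_univ_two, sq_abs]
  rcases hd with hd1 | hd1 <;> subst hd1
  · -- d = (1,0)
    set e : E2 := pt (2*r) 0 with he
    have hBA : vtx r (p + (1,0)) = vtx r p + e := by
      refine PiLp.ext fun i => ?_
      have hp1 : ((p + (1,0)).1 : ℝ) = (p.1 : ℝ) + 1 := by push_cast [Prod.fst_add]; norm_num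
      have hp2 : ((p + (1,0)).2 : ℝ) = (p.2 : ℝ) := by push_cast [Prod.snd_add]; norm_num
      fin_cases i
      · show 2*r*((p + (1,0)).1 : ℝ) = 2*r*(p.1:ℝ) + 2*r
        rw [hp1]; ring
      · show 2*r*((p + (1,0)).2 : ℝ) = 2*r*(p.2:ℝ) + 0
        rw [hp2]; ring
    have hσ : ∀ t : ℝ, ‖e + t • pt 1 1‖^2 = 4*r^2 + 4*r*t + 2*t^2 := by
      intro t
      rw [hnormsq]
      have h0 : (e + t • pt 1 1) 0 = 2*r + t := by show 2*r + t*1 = _; ring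
      have h1 : (e + t • pt 1 1) 1 = t := by show 0 + t*1 = _; ring
      rw [h0, h1]; ring
    have hGb : ∫⁻ u in Icc (0:ℝ) 1, ∫⁻ s in Icc (-(ε*r)) (ε*r),
        g (vtx r p + u • e + s • pt 1 1) ∂volume ∂volume
          ≤ ENNReal.ofReal (2*r)⁻¹ * Gtot := by
      have hdet : e 0 * (pt 1 1) 1 - (pt 1 1) 0 * e 1 = 2*r := by
        show 2*r * 1 - 1 * 0 = 2*r; ring
      have hcb := cov_bound (vtx r p) e (pt 1 1)
        (by rw [hdet]; positivity) hg
        (Rnb r C p (p + (1,0))) (Rnb_measurableSet r C p _) (ε*r)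
        (strip_subset_Rnb_h hr hε hε1 hA hB)
      rw [hdet, abs_of_pos (by positivity : (0:ℝ) < 2*r)] at hcb
      exact hcb
    have hcore := core_lemma r ε hr hε hε1 (vtx r p) e hσ g hg Gtot hGtop hGb
    rw [← hBA, ← hthresh] at hcore
    exact hcore
  · -- d = (0,1)
    set e : E2 := pt 0 (2*r) with he
    have hBA : vtx r (p + (0,1)) = vtx r p + e := by
      refine PiLp.ext fun i => ?_
      have hp1 : ((p + (0,1)).1 : ℝ) = (p.1 : ℝ) := by push_cast [Prod.fst_add]; norm_num
      have hp2 : ((p + (0,1)).2 : ℝ) = (p.2 : ℝ) + 1 := by push_cast [Prod.snd_add]; norm_num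
      fin_cases i
      · show 2*r*((p + (0,1)).1 : ℝ) = 2*r*(p.1:ℝ) + 0
        rw [hp1]; ring
      · show 2*r*((p + (0,1)).2 : ℝ) = 2*r*(p.2:ℝ) + 2*r
        rw [hp2]; ring
    have hσ : ∀ t : ℝ, ‖e + t • pt 1 1‖^2 = 4*r^2 + 4*r*t + 2*t^2 := by
      intro t
      rw [hnormsq]
      have h0 : (e + t • pt 1 1) 0 = t := by show 0 + t*1 = _; ring
      have h1 : (e + t • pt 1 1) 1 = 2*r + t := by show 2*r + t*1 = _; ring
      rw [h0, h1]; ring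
    have hGb : ∫⁻ u in Icc (0:ℝ) 1, ∫⁻ s in Icc (-(ε*r)) (ε*r),
        g (vtx r p + u • e + s • pt 1 1) ∂volume ∂volume
          ≤ ENNReal.ofReal (2*r)⁻¹ * Gtot := by
      have hdet : e 0 * (pt 1 1) 1 - (pt 1 1) 0 * e 1 = -(2*r) := by
        show 0 * 1 - 1 * (2*r) = -(2*r); ring
      have hcb := cov_bound (vtx r p) e (pt 1 1)
        (by rw [hdet]; simp; positivity) hg
        (Rnb r C p (p + (0,1))) (Rnb_measurableSet r C p _) (ε*r)
        (strip_subset_Rnb_v hr hε hε1 hA hB)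
      rw [hdet, abs_neg, abs_of_pos (by positivity : (0:ℝ) < 2*r)] at hcb
      exact hcb
    have hcore := core_lemma r ε hr hε hε1 (vtx r p) e hσ g hg Gtot hGtop hGb
    rw [← hBA, ← hthresh] at hcore
    exact hcore

/-- **Lemma (moving the vertices of the grid: sides of type A).** Let `Ω ⊆ ℝ²` be an `r`-set,
`f ∈ W^{1,1}(Ω, ℝ²)`, let `AB` be a side of type A of the grid (both endpoints in the interior
of `Ω`), let `ε ≪ 1` and `M ∈ ℝ^{2×2}`. With `ℛ` the union of the `6` squares of the grid
having `A` or `B` as a vertex and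
`Γ(A,B,M) = {(x,y) ∈ I_ε(A) × I_ε(B) : ∫_{xy} |Df − M| dℋ¹ > 25/(εr) ∫_ℛ |Df − M|}`, one has
`ℋ¹({x ∈ I_ε(A) : ℋ¹({y ∈ I_ε(B) : (x,y) ∈ Γ}) > ℋ¹(I_ε(B))/5}) < ℋ¹(I_ε(A))/5`. -/
theorem statement_9 (r : ℝ) (hr : 0 < r) (C : Finset (ℤ × ℤ)) (f : E2 → E2)
    (hf : MemW11 (Rset r C) f) (ε : ℝ) (hε : 0 < ε) (hε1 : ε < 1)
    (p d : ℤ × ℤ) (hd : d = (1,0) ∨ d = (0,1)) (hedge : isEdge C p (p + d))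
    (hA : vtx r p ∈ interior (Rset r C)) (hB : vtx r (p + d) ∈ interior (Rset r C))
    (M : E2 →L[ℝ] E2) :
    μH[1] {x ∈ IsegA r ε (vtx r p) |
        μH[1] {y ∈ IsegA r ε (vtx r (p + d)) |
            ENNReal.ofReal ((25/(ε*r)) * ∫ z in Rnb r C p (p + d), ‖fderiv ℝ f z - M‖)
              < ∫⁻ t in segment ℝ x y, (‖fderiv ℝ f t - M‖₊ : ℝ≥0∞) ∂μH[1]}
          > μH[1] (IsegA r ε (vtx r (p + d))) / 5}
      < μH[1] (IsegA r ε (vtx r p)) / 5 := by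
  exact statement_9' r hr C f hf ε hε hε1 p d hd hedge hA hB M

end
end

section
/- Let 𝒮₀ = {(x,y) ∈ ℝ² : |x|+|y| < 1} and let g : ∂𝒮₀ → ℝ² be piecewise linear and one-to-one with ∫_{∂𝒮₀}|Dg| dℋ¹ > 0. Then there exist two opposite points P₁, P₂ ∈ ∂𝒮₀ (i.e. P₂ = −P₁) such that for every r ∈ (0, √2) and each i ∈ {1, 2}, ∫_{B(P_i, r) ∩ ∂𝒮₀} |Dg| dℋ¹ ≤ 6r ∫_{∂𝒮₀} |Dg| dℋ¹. -/
set_option autoImplicit false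

open MeasureTheory Set Metric
open scoped ENNReal NNReal Classical

noncomputable section

/-- The open "rotated" square `𝒮₀ = {(x,y) : |x| + |y| < 1}`. -/
def S0 : Set E2 := {x | |x 0| + |x 1| < 1}

/-- The boundary `∂𝒮₀ = {(x,y) : |x| + |y| = 1}`. -/
def bdS0 : Set E2 := {x | |x 0| + |x 1| = 1}

/-- A choice of unit tangent vector at the points of `∂𝒮₀`: `(1,-1)/√2` on the two sides in
the first and third quadrants, `(1,1)/√2` on the two sides in the second and fourth quadrants
(the corners are `ℋ¹`-negligible). -/
def tauS0 (x : E2) : E2 :=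
  (Real.sqrt 2)⁻¹ • (if 0 ≤ x 0 * x 1 then pt 1 (-1) else pt 1 1)

lemma line_image_meas (A u : E2) (hu : ‖u‖ = 1) (s : Set ℝ) :
    μH[1] ((fun t : ℝ => A + t • u) '' s) = volume s := by
  have h1 : (fun t : ℝ => A + t • u) = fun t => AffineMap.lineMap A (A + u) t := by
    funext t
    rw [AffineMap.lineMap_apply_module]
    module
  rw [h1, MeasureTheory.hausdorffMeasure_lineMap_image, MeasureTheory.hausdorffMeasure_real]
  have h2 : nndist A (A + u) = 1 := by
    ext
    rw [coe_nndist, dist_self_add_right, hu]; norm_num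
  rw [h2, one_smul]

lemma meas_ball_inter_seg (A B x : E2) (ρ : ℝ) :
    μH[1] (ball x ρ ∩ segment ℝ A B) ≤ ENNReal.ofReal (2 * ρ) := by
  rcases eq_or_ne B A with h | hBA
  · haveI : NoAtoms (μH[1] : Measure E2) := MeasureTheory.Measure.noAtoms_hausdorff E2 one_pos
    calc μH[1] (ball x ρ ∩ segment ℝ A B) ≤ μH[1] {A} := by
          apply measure_mono; rw [h, segment_same]; exact inter_subset_right
      _ = 0 := by
          haveI := MeasureTheory.Measure.nullSingletonClass_hausdorff E2 (one_pos (α := ℝ))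
          exact measure_singleton A
      _ ≤ _ := zero_le
  · set L : ℝ := ‖B - A‖ with hL
    have hL0 : 0 < L := norm_pos_iff.2 (sub_ne_zero.2 hBA)
    set u : E2 := L⁻¹ • (B - A) with hu_def
    have hu : ‖u‖ = 1 := by
      rw [hu_def, norm_smul, norm_inv, norm_norm, ← hL, inv_mul_cancel₀ hL0.ne']
    set p : ℝ := inner ℝ u (x - A) with hp
    have hsub : ball x ρ ∩ segment ℝ A B ⊆ (fun t : ℝ => A + t • u) '' Ioo (p - ρ) (p + ρ) := by
      rintro y ⟨hy1, hy2⟩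
      rw [segment_eq_image'] at hy2
      obtain ⟨θ, _, rfl⟩ := hy2
      have key : θ • (B - A) = (θ * L) • u := by
        rw [hu_def, smul_smul, mul_assoc, mul_inv_cancel₀ hL0.ne', mul_one]
      refine ⟨θ * L, ?_, by show A + (θ * L) • u = A + θ • (B - A); rw [key]⟩
      have h2 : θ * L - p = inner ℝ u ((A + θ • (B - A)) - x) := by
        rw [show (A + θ • (B - A)) - x = θ • (B - A) - (x - A) by abel, inner_sub_right,
          key, real_inner_smul_right, real_inner_self_eq_norm_sq, hu]
        ring
      have h3 : |θ * L - p| < ρ := by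
        rw [h2]
        calc |(inner ℝ u ((A + θ • (B - A)) - x) : ℝ)| ≤ ‖u‖ * ‖(A + θ • (B - A)) - x‖ :=
              abs_real_inner_le_norm u _
          _ = dist (A + θ • (B - A)) x := by rw [hu, one_mul, dist_eq_norm]
          _ < ρ := mem_ball.1 hy1
      rw [abs_lt] at h3
      constructor <;> linarith [h3.1, h3.2]
    calc μH[1] (ball x ρ ∩ segment ℝ A B) ≤ μH[1] ((fun t : ℝ => A + t • u) '' Ioo (p - ρ) (p + ρ)) :=
          measure_mono hsub
      _ = volume (Ioo (p - ρ) (p + ρ)) := line_image_meas A u hu _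
      _ = ENNReal.ofReal (2 * ρ) := by rw [Real.volume_Ioo]; congr 1; ring

lemma pt_apply_zero (a b : ℝ) : (pt a b) 0 = a := rfl
lemma pt_apply_one (a b : ℝ) : (pt a b) 1 = b := rfl

lemma comb_mem_seg {x A B : E2} {a b : ℝ} (ha : 0 ≤ a) (hb : 0 ≤ b) (hab : a + b = 1)
    (h0 : a * A 0 + b * B 0 = x 0) (h1 : a * A 1 + b * B 1 = x 1) : x ∈ segment ℝ A B := by
  refine ⟨a, b, ha, hb, hab, ?_⟩
  ext i
  fin_cases i
  · show (a • A + b • B) 0 = x 0; simpa using h0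
  · show (a • A + b • B) 1 = x 1; simpa using h1

lemma bd_subset_sides : bdS0 ⊆ segment ℝ (pt 1 0) (pt 0 1) ∪ segment ℝ (pt 0 1) (pt (-1) 0) ∪
    segment ℝ (pt (-1) 0) (pt 0 (-1)) ∪ segment ℝ (pt 0 (-1)) (pt 1 0) := by
  intro x hx
  have hx' : |x 0| + |x 1| = 1 := hx
  rcases le_or_gt 0 (x 0) with h0 | h0 <;> rcases le_or_gt 0 (x 1) with h1 | h1
  · left; left; left
    rw [abs_of_nonneg h0, abs_of_nonneg h1] at hx'
    exact comb_mem_seg h0 h1 hx' (by simp [pt_apply_zero, pt_apply_one])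
      (by simp [pt_apply_zero, pt_apply_one])
  · right
    rw [abs_of_nonneg h0, abs_of_neg h1] at hx'
    refine comb_mem_seg (a := -(x 1)) (b := x 0) (by linarith) h0 (by linarith) ?_ ?_ <;>
      simp [pt_apply_zero, pt_apply_one]
  · left; left; right
    rw [abs_of_neg h0, abs_of_nonneg h1] at hx'
    refine comb_mem_seg (a := x 1) (b := -(x 0)) h1 (by linarith) (by linarith) ?_ ?_ <;>
      simp [pt_apply_zero, pt_apply_one]
  · left; right
    rw [abs_of_neg h0, abs_of_neg h1] at hx'
    refine comb_mem_seg (a := -(x 0)) (b := -(x 1)) (by linarith) (by linarith) (by linarith) ?_ ?_ <;>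
      simp [pt_apply_zero, pt_apply_one]

lemma meas_ball_bd (x : E2) (ρ : ℝ) :
    μH[1] (ball x ρ ∩ bdS0) ≤ ENNReal.ofReal (8 * ρ) := by
  rcases le_or_gt ρ 0 with hρ | hρ
  · rw [ball_eq_empty.2 hρ, empty_inter, measure_empty]; exact zero_le
  have key : ball x ρ ∩ bdS0 ⊆
      (ball x ρ ∩ segment ℝ (pt 1 0) (pt 0 1)) ∪ (ball x ρ ∩ segment ℝ (pt 0 1) (pt (-1) 0)) ∪
      (ball x ρ ∩ segment ℝ (pt (-1) 0) (pt 0 (-1))) ∪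
      (ball x ρ ∩ segment ℝ (pt 0 (-1)) (pt 1 0)) := by
    rintro y ⟨hy1, hy2⟩
    rcases bd_subset_sides hy2 with ((h | h) | h) | h
    · exact Or.inl (Or.inl (Or.inl ⟨hy1, h⟩))
    · exact Or.inl (Or.inl (Or.inr ⟨hy1, h⟩))
    · exact Or.inl (Or.inr ⟨hy1, h⟩)
    · exact Or.inr ⟨hy1, h⟩
  calc μH[1] (ball x ρ ∩ bdS0) ≤ _ := measure_mono key
    _ ≤ μH[1] (ball x ρ ∩ segment ℝ (pt 1 0) (pt 0 1)) +
        μH[1] (ball x ρ ∩ segment ℝ (pt 0 1) (pt (-1) 0)) +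
        μH[1] (ball x ρ ∩ segment ℝ (pt (-1) 0) (pt 0 (-1))) +
        μH[1] (ball x ρ ∩ segment ℝ (pt 0 (-1)) (pt 1 0)) := by
      refine le_trans (measure_union_le _ _) ?_
      gcongr
      refine le_trans (measure_union_le _ _) ?_
      gcongr
      exact measure_union_le _ _
    _ ≤ ENNReal.ofReal (2 * ρ) + ENNReal.ofReal (2 * ρ) + ENNReal.ofReal (2 * ρ) +
        ENNReal.ofReal (2 * ρ) := by
      gcongr <;> exact meas_ball_inter_seg _ _ _ _
    _ = ENNReal.ofReal (8 * ρ) := by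
      rw [← ENNReal.ofReal_add (by linarith) (by linarith), ← ENNReal.ofReal_add (by linarith)
        (by linarith), ← ENNReal.ofReal_add (by linarith) (by linarith)]
      congr 1; ring

def sq2 : ℝ := Real.sqrt 2

lemma sq2_pos : 0 < sq2 := Real.sqrt_pos.2 two_pos
lemma sq2_sq : sq2 * sq2 = 2 := Real.mul_self_sqrt two_pos.le

def oside (A : E2) (c d : ℝ) : Set E2 :=
  (fun t : ℝ => A + t • (sq2⁻¹ • pt c d)) '' Ioo 0 sq2

lemma norm_unit {c d : ℝ} (h : c ^ 2 + d ^ 2 = 2) : ‖sq2⁻¹ • pt c d‖ = 1 := by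
  rw [norm_smul, norm_inv, Real.norm_eq_abs, abs_of_pos sq2_pos, EuclideanSpace.norm_eq]
  simp only [Fin.sum_univ_two, pt_apply_zero, pt_apply_one, Real.norm_eq_abs, sq_abs]
  rw [h, show Real.sqrt 2 = sq2 from rfl]
  field_simp [sq2_pos.ne']

lemma oside_meas {A : E2} {c d : ℝ} (h : c ^ 2 + d ^ 2 = 2) :
    μH[1] (oside A c d) = ENNReal.ofReal sq2 := by
  rw [oside, line_image_meas _ _ (norm_unit h), Real.volume_Ioo, sub_zero]

lemma oside_measurable (A : E2) (c d : ℝ) (h : c ^ 2 + d ^ 2 = 2) :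
    MeasurableSet (oside A c d) := by
  have hw : (sq2⁻¹ • pt c d : E2) ≠ 0 := by
    intro h0
    have := norm_unit h
    rw [h0, norm_zero] at this
    norm_num at this
  have hinj : Function.Injective (fun t : ℝ => A + t • (sq2⁻¹ • pt c d)) := by
    intro s t hst
    simp only [add_right_injective] at hst
    have : (s - t) • (sq2⁻¹ • pt c d) = 0 := by
      rw [sub_smul, sub_eq_zero]; exact (add_right_injective A) hst
    rcases smul_eq_zero.1 this with h' | h'
    · linarith [sub_eq_zero.1 (by linarith [h'] : s - t = (0:ℝ))]
    · exact absurd h' hw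
  have : oside A c d = (fun t : ℝ => A + t • (sq2⁻¹ • pt c d)) '' Icc 0 sq2 \
      (fun t : ℝ => A + t • (sq2⁻¹ • pt c d)) '' {0, sq2} := by
    rw [← Set.image_diff hinj, Set.Icc_diff_both]; rfl
  rw [this]
  refine MeasurableSet.diff ?_ ?_
  · refine (IsCompact.image isCompact_Icc ?_).measurableSet
    exact continuous_const.add (continuous_id.smul continuous_const)
  · exact ((Set.finite_singleton _).insert _).image _ |>.measurableSet

lemma mem_oside {A : E2} {c d : ℝ} {y : E2} (hy : y ∈ oside A c d) :
    ∃ s : ℝ, 0 < s ∧ s < 1 ∧ y 0 = A 0 + s * c ∧ y 1 = A 1 + s * d := by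
  obtain ⟨t, ht, rfl⟩ := hy
  refine ⟨t / sq2, div_pos ht.1 sq2_pos, (div_lt_one sq2_pos).2 ht.2, ?_, ?_⟩
  · simp only [PiLp.add_apply, PiLp.smul_apply, smul_eq_mul, pt_apply_zero]
    ring
  · simp only [PiLp.add_apply, PiLp.smul_apply, smul_eq_mul, pt_apply_one]
    ring

lemma meas_bd_lower : ENNReal.ofReal (4 * sq2) ≤ μH[1] bdS0 := by
  set O1 := oside (pt 1 0) (-1) 1
  set O2 := oside (pt 0 1) (-1) (-1)
  set O3 := oside (pt (-1) 0) 1 (-1)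
  set O4 := oside (pt 0 (-1)) 1 1
  have hs : ((-1:ℝ)) ^ 2 + (1:ℝ) ^ 2 = 2 := by norm_num
  have hs2 : ((-1:ℝ)) ^ 2 + (-1:ℝ) ^ 2 = 2 := by norm_num
  have hs3 : ((1:ℝ)) ^ 2 + (-1:ℝ) ^ 2 = 2 := by norm_num
  have hs4 : ((1:ℝ)) ^ 2 + (1:ℝ) ^ 2 = 2 := by norm_num
  -- coordinate descriptions
  have c1 : ∀ y ∈ O1, 0 < y 0 ∧ 0 < y 1 ∧ y 0 + y 1 = 1 := by
    intro y hy; obtain ⟨s, h0, h1, e0, e1⟩ := mem_oside hy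
    rw [e0, e1, pt_apply_zero, pt_apply_one]; constructor; nlinarith; constructor; nlinarith; ring
  have c2 : ∀ y ∈ O2, y 0 < 0 ∧ 0 < y 1 ∧ -(y 0) + y 1 = 1 := by
    intro y hy; obtain ⟨s, h0, h1, e0, e1⟩ := mem_oside hy
    rw [e0, e1, pt_apply_zero, pt_apply_one]; constructor; nlinarith; constructor; nlinarith; ring
  have c3 : ∀ y ∈ O3, y 0 < 0 ∧ y 1 < 0 ∧ -(y 0) + -(y 1) = 1 := by
    intro y hy; obtain ⟨s, h0, h1, e0, e1⟩ := mem_oside hy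
    rw [e0, e1, pt_apply_zero, pt_apply_one]; constructor; nlinarith; constructor; nlinarith; ring
  have c4 : ∀ y ∈ O4, 0 < y 0 ∧ y 1 < 0 ∧ y 0 + -(y 1) = 1 := by
    intro y hy; obtain ⟨s, h0, h1, e0, e1⟩ := mem_oside hy
    rw [e0, e1, pt_apply_zero, pt_apply_one]; constructor; nlinarith; constructor; nlinarith; ring
  have hsub : O1 ∪ O2 ∪ O3 ∪ O4 ⊆ bdS0 := by
    rintro y (((h | h) | h) | h)
    · obtain ⟨a, b, c⟩ := c1 y h
      show |y 0| + |y 1| = 1; rw [abs_of_pos a, abs_of_pos b]; exact c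
    · obtain ⟨a, b, c⟩ := c2 y h
      show |y 0| + |y 1| = 1; rw [abs_of_neg a, abs_of_pos b]; exact c
    · obtain ⟨a, b, c⟩ := c3 y h
      show |y 0| + |y 1| = 1; rw [abs_of_neg a, abs_of_neg b]; exact c
    · obtain ⟨a, b, c⟩ := c4 y h
      show |y 0| + |y 1| = 1; rw [abs_of_pos a, abs_of_neg b]; exact c
  have d12 : Disjoint O1 O2 := Set.disjoint_left.2 fun y h1 h2 =>
    absurd (c2 y h2).1 (not_lt.2 (c1 y h1).1.le)
  have d13 : Disjoint O1 O3 := Set.disjoint_left.2 fun y h1 h2 =>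
    absurd (c3 y h2).1 (not_lt.2 (c1 y h1).1.le)
  have d14 : Disjoint O1 O4 := Set.disjoint_left.2 fun y h1 h2 =>
    absurd (c4 y h2).2.1 (not_lt.2 (c1 y h1).2.1.le)
  have d23 : Disjoint O2 O3 := Set.disjoint_left.2 fun y h1 h2 =>
    absurd (c3 y h2).2.1 (not_lt.2 (c2 y h1).2.1.le)
  have d24 : Disjoint O2 O4 := Set.disjoint_left.2 fun y h1 h2 =>
    absurd (c4 y h2).1 (not_lt.2 (c2 y h1).1.le)
  have d34 : Disjoint O3 O4 := Set.disjoint_left.2 fun y h1 h2 =>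
    absurd (c4 y h2).1 (not_lt.2 (c3 y h1).1.le)
  have m2 := oside_measurable (pt 0 1) (-1) (-1) hs2
  have m3 := oside_measurable (pt (-1) 0) 1 (-1) hs3
  have m4 := oside_measurable (pt 0 (-1)) 1 1 hs4
  calc ENNReal.ofReal (4 * sq2) = ENNReal.ofReal sq2 + ENNReal.ofReal sq2 + ENNReal.ofReal sq2 +
      ENNReal.ofReal sq2 := by
        have h4 : (4:ℝ) * sq2 = sq2 + sq2 + sq2 + sq2 := by ring
        have hp := sq2_pos
        rw [h4, ENNReal.ofReal_add (by linarith) (by linarith),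
          ENNReal.ofReal_add (by linarith) (by linarith),
          ENNReal.ofReal_add (by linarith) (by linarith)]
    _ = μH[1] (O1 ∪ O2 ∪ O3 ∪ O4) := by
        rw [measure_union ((d14.union_left d24).union_left d34) m4,
          measure_union (d13.union_left d23) m3, measure_union d12 m2,
          oside_meas hs, oside_meas hs2, oside_meas hs3, oside_meas hs4]
    _ ≤ μH[1] bdS0 := measure_mono hsub

lemma measurableSet_bdS0 : MeasurableSet bdS0 := by
  have hc : Continuous fun x : E2 => |x 0| + |x 1| :=
    ((PiLp.continuous_apply (p := 2) (β := fun _ : Fin 2 => ℝ) 0).abs.add (PiLp.continuous_apply (p := 2) (β := fun _ : Fin 2 => ℝ) 1).abs)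
  exact (isClosed_eq hc continuous_const).measurableSet

lemma neg_mem_bdS0 {x : E2} (hx : x ∈ bdS0) : -x ∈ bdS0 := by
  show |(-x) 0| + |(-x) 1| = 1
  rw [show (-x) 0 = -(x 0) from rfl, show (-x) 1 = -(x 1) from rfl, abs_neg, abs_neg]
  exact hx

lemma isometry_neg_E2 : Isometry (fun x : E2 => -x) := by
  intro a b
  simp only [edist_dist, dist_eq_norm]
  rw [show -a - -b = -(a - b) by abel, norm_neg]


/-- **Step (choice of good corners).** Let `g : ∂𝒮₀ → ℝ²` be piecewise linear and one-to-one,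
with `∫_{∂𝒮₀} |Dg| dℋ¹ > 0`. Then there are two opposite points `P, −P ∈ ∂𝒮₀` such that for
every `r ∈ (0, √2)` one has `∫_{B(P,r) ∩ ∂𝒮₀} |Dg| dℋ¹ ≤ 6r ∫_{∂𝒮₀} |Dg| dℋ¹`, and the same
holds for `−P`. -/
theorem statement_19 (g : E2 → E2) (hpl : PiecewiseLinearOn g bdS0) (hinj : InjOn g bdS0)
    (hpos : 0 < ∫ t in bdS0, ‖lineDeriv ℝ g t (tauS0 t)‖ ∂μH[1]) :
    ∃ P : E2, P ∈ bdS0 ∧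
      ∀ r ∈ Ioo (0:ℝ) (Real.sqrt 2), ∀ P' ∈ ({P, -P} : Set E2),
        (∫ t in Metric.ball P' r ∩ bdS0, ‖lineDeriv ℝ g t (tauS0 t)‖ ∂μH[1]) ≤
          6 * r * ∫ t in bdS0, ‖lineDeriv ℝ g t (tauS0 t)‖ ∂μH[1] := by
  classical
  set F : E2 → ℝ := fun t => ‖lineDeriv ℝ g t (tauS0 t)‖ with hF
  set m : ℝ := ∫ t in bdS0, F t ∂μH[1] with hm
  have hm_pos : 0 < m := hpos
  have hInt : IntegrableOn F bdS0 μH[1] := by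
    by_contra hni
    rw [hm, MeasureTheory.integral_undef hni] at hm_pos
    exact lt_irrefl 0 hm_pos
  set μ0 : Measure E2 := (μH[1] : Measure E2).restrict bdS0 with hμ0
  set f : E2 → ℝ≥0∞ := fun t => ENNReal.ofReal (F t) with hf
  set ν : Measure E2 := μ0.withDensity f with hν
  have hν_fin : ν univ ≠ ⊤ := by
    rw [hν, withDensity_apply _ MeasurableSet.univ, Measure.restrict_univ]
    exact hInt.lintegral_lt_top.ne
  have hν_s_fin : ∀ s : Set E2, ν s ≠ ⊤ :=
    fun s => ((measure_mono (subset_univ s)).trans_lt hν_fin.lt_top).ne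
  have hAESM : AEStronglyMeasurable F μ0 := hInt.aestronglyMeasurable
  have key : ∀ s : Set E2, MeasurableSet s →
      (∫ t in s ∩ bdS0, F t ∂μH[1]) = (ν s).toReal := by
    intro s hs
    have h1 : (μH[1] : Measure E2).restrict (s ∩ bdS0) = μ0.restrict s := by
      rw [hμ0, Measure.restrict_restrict hs]
    rw [show (∫ t in s ∩ bdS0, F t ∂μH[1]) = ∫ t, F t ∂(μ0.restrict s) by rw [← h1]]
    rw [integral_eq_lintegral_of_nonneg_ae (Filter.Eventually.of_forall fun t => norm_nonneg _)
      (hAESM.mono_measure Measure.restrict_le_self)]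
    congr 1
    rw [hν, withDensity_apply _ hs]
  have hν_univ : ν univ = ENNReal.ofReal m := by
    have h := key univ MeasurableSet.univ
    rw [univ_inter] at h
    have h2 : m = (ν univ).toReal := h
    rw [h2, ENNReal.ofReal_toReal hν_fin]
  -- the bad set
  set Bad : Set E2 := {P : E2 | ∃ r ∈ Ioo (0:ℝ) (Real.sqrt 2),
    ¬ ((∫ t in ball P r ∩ bdS0, F t ∂μH[1]) ≤ 6 * r * m)} with hBad
  -- radii choice
  have hch : ∀ P : E2, ∃ r : ℝ, P ∈ Bad → (r ∈ Ioo (0:ℝ) (Real.sqrt 2) ∧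
      6 * r * m < ∫ t in ball P r ∩ bdS0, F t ∂μH[1]) := by
    intro P
    by_cases hP : P ∈ Bad
    · obtain ⟨r, hr1, hr2⟩ := hP
      exact ⟨r, fun _ => ⟨hr1, not_le.1 hr2⟩⟩
    · exact ⟨1, fun h => absurd h hP⟩
  choose rad hrad using hch
  -- bound on the bad set
  have hbad : μH[1] (Bad ∩ bdS0) ≤ ENNReal.ofReal (41 / 15) := by
    obtain ⟨u, hu_sub, hu_disj, hu_cov⟩ :=
      Vitali.exists_disjoint_subfamily_covering_enlargement (fun P : E2 => ball P (rad P))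
        (Bad ∩ bdS0) rad (21/20) (by norm_num)
        (fun a ha => ((hrad a ha.1).1.1).le) (Real.sqrt 2)
        (fun a ha => ((hrad a ha.1).1.2).le)
        (fun a ha => nonempty_ball.2 (hrad a ha.1).1.1)
    have hmem : ∀ b : E2, b ∈ u → 6 * rad b * m < (ν (ball b (rad b))).toReal := by
      intro b hb
      have hbBad := (hu_sub hb).1
      have := (hrad b hbBad).2
      rwa [key _ measurableSet_ball] at this
    have hpos_rad : ∀ b : E2, b ∈ u → 0 < rad b := fun b hb => (hrad b (hu_sub hb).1).1.1
    -- countability of u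
    have hAs_disj : Pairwise (Function.onFun Disjoint fun b : ↥u => ball (b : E2) (rad b)) := by
      intro b c hbc
      exact hu_disj b.2 c.2 (Subtype.coe_injective.ne hbc)
    have hcnt : u.Countable := by
      have h1 := Measure.countable_meas_pos_of_disjoint_of_meas_iUnion_ne_top ν
        (fun b : ↥u => measurableSet_ball) hAs_disj
        ((measure_mono (subset_univ _)).trans_lt hν_fin.lt_top).ne
      have h2 : {i : ↥u | 0 < ν (ball (i : E2) (rad i))} = univ := by
        refine eq_univ_of_forall fun b => ?_
        have h3 := hmem b b.2
        have h4 : 0 < 6 * rad b * m := by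
          have := hpos_rad b b.2; positivity
        by_contra h5
        rw [mem_setOf_eq, not_lt, nonpos_iff_eq_zero] at h5
        rw [h5, ENNReal.toReal_zero] at h3
        linarith
      rw [← countable_coe_iff]
      rw [h2] at h1
      exact countable_univ_iff.1 h1
    haveI : Countable ↥u := countable_coe_iff.2 hcnt
    -- covering
    have hcov : Bad ∩ bdS0 ⊆ ⋃ b : ↥u, (ball (b : E2) ((41/20) * rad b) ∩ bdS0) := by
      intro a ha
      obtain ⟨b, hbu, ⟨z, hz1, hz2⟩, hle⟩ := hu_cov a ha
      refine mem_iUnion.2 ⟨⟨b, hbu⟩, ⟨?_, ha.2⟩⟩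
      rw [mem_ball]
      calc dist a b ≤ dist a z + dist z b := dist_triangle a z b
        _ < rad a + rad b := by
            rw [mem_ball] at hz1; rw [mem_ball] at hz2
            rw [dist_comm a z]
            have := dist_comm z b
            linarith [hz1, hz2]
        _ ≤ (21/20) * rad b + rad b := by linarith [hle]
        _ = (41/20) * rad b := by ring
    -- sum up
    set C : ℝ≥0∞ := ENNReal.ofReal (41 / (15 * m)) with hC
    calc μH[1] (Bad ∩ bdS0) ≤ μH[1] (⋃ b : ↥u, (ball (b : E2) ((41/20) * rad b) ∩ bdS0)) :=
          measure_mono hcov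
      _ ≤ ∑' b : ↥u, μH[1] (ball (b : E2) ((41/20) * rad b) ∩ bdS0) := measure_iUnion_le _
      _ ≤ ∑' b : ↥u, C * ν (ball (b : E2) (rad b)) := by
          refine ENNReal.tsum_le_tsum fun b => ?_
          have h8 : μH[1] (ball (b : E2) ((41/20) * rad b) ∩ bdS0) ≤
              ENNReal.ofReal (8 * ((41/20) * rad b)) := meas_ball_bd _ _
          refine h8.trans ?_
          have heq : 8 * ((41/20) * rad b) = (41 / (15 * m)) * (6 * rad b * m) := by
            field_simp
            ring
          rw [heq, ENNReal.ofReal_mul (div_nonneg (by norm_num) (by linarith))]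
          refine mul_le_mul_right ?_ C
          have h9 : ENNReal.ofReal (6 * rad b * m) ≤ ν (ball (b : E2) (rad b)) := by
            rw [← ENNReal.ofReal_toReal (hν_s_fin (ball (b : E2) (rad b)))]
            exact ENNReal.ofReal_le_ofReal (hmem b b.2).le
          exact h9
      _ = C * ∑' b : ↥u, ν (ball (b : E2) (rad b)) := ENNReal.tsum_mul_left
      _ = C * ν (⋃ b : ↥u, ball (b : E2) (rad b)) := by
          rw [measure_iUnion hAs_disj (fun b => measurableSet_ball)]
      _ ≤ C * ν univ := mul_le_mul_right (measure_mono (subset_univ _)) C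
      _ = ENNReal.ofReal (41 / 15) := by
          rw [hν_univ, hC, ← ENNReal.ofReal_mul (div_nonneg (by norm_num) (by linarith))]
          congr 1
          field_simp
  -- the negated bad set
  have hbad_neg : μH[1] ({P : E2 | -P ∈ Bad} ∩ bdS0) ≤ ENNReal.ofReal (41 / 15) := by
    have himg : {P : E2 | -P ∈ Bad} ∩ bdS0 = (fun x : E2 => -x) '' (Bad ∩ bdS0) := by
      ext y
      constructor
      · rintro ⟨hy1, hy2⟩
        exact ⟨-y, ⟨hy1, neg_mem_bdS0 hy2⟩, neg_neg y⟩
      · rintro ⟨z, ⟨hz1, hz2⟩, rfl⟩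
        exact ⟨by simpa using hz1, neg_mem_bdS0 hz2⟩
    rw [himg, isometry_neg_E2.hausdorffMeasure_image (Or.inl zero_le_one)]
    exact hbad
  -- find a good point
  have hgood : ∃ P, P ∈ bdS0 ∧ P ∉ Bad ∧ -P ∉ Bad := by
    by_contra hcon
    push_neg at hcon
    have hsub : bdS0 ⊆ (Bad ∩ bdS0) ∪ ({P : E2 | -P ∈ Bad} ∩ bdS0) := by
      intro P hP
      rcases Classical.em (P ∈ Bad) with h | h
      · exact Or.inl ⟨h, hP⟩
      · exact Or.inr ⟨hcon P hP h, hP⟩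
    have hchain : ENNReal.ofReal (4 * sq2) ≤ ENNReal.ofReal (82 / 15) := by
      calc ENNReal.ofReal (4 * sq2) ≤ μH[1] bdS0 := meas_bd_lower
        _ ≤ μH[1] ((Bad ∩ bdS0) ∪ ({P : E2 | -P ∈ Bad} ∩ bdS0)) := measure_mono hsub
        _ ≤ μH[1] (Bad ∩ bdS0) + μH[1] ({P : E2 | -P ∈ Bad} ∩ bdS0) := measure_union_le _ _
        _ ≤ ENNReal.ofReal (41 / 15) + ENNReal.ofReal (41 / 15) := add_le_add hbad hbad_neg
        _ = ENNReal.ofReal (82 / 15) := by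
            rw [← ENNReal.ofReal_add (by norm_num) (by norm_num)]; norm_num
    rw [ENNReal.ofReal_le_ofReal_iff (by norm_num)] at hchain
    nlinarith [sq2_sq, sq2_pos]
  obtain ⟨P, hPbd, hP1, hP2⟩ := hgood
  refine ⟨P, hPbd, fun r hr P' hP' => ?_⟩
  by_contra hc
  rcases hP' with rfl | hP'
  · exact hP1 ⟨r, hr, hc⟩
  · rw [mem_singleton_iff] at hP'
    subst hP'
    exact hP2 ⟨r, hr, by simpa using hc⟩


end
end
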